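/- arXiv:2005.04018 — 3 statements merged into one kernel-verified Lean document; each statement's English description precedes it below -/
import Mathlib

section
/- Existence of MD lex-optimal strategies in the absorbing case: For every stochastic game G and every absorbing lex-objective Ω = (Ω_1,…,Ω_n), there exist memoryless deterministic (MD) lex-optimal strategies for both players; that is, there is an MD strategy σ of Max with inf_τ P_s^{σ,τ}(Ω) = v(s) (in ≤_lex) for all states s, and an MD strategy τ of Min with sup_σ P_s^{σ,τ}(Ω) = v(s) (in ≤_lex) for all states s. -/
open scoped Classical

/-! ### Lexicographic order on vectors -/

/-- `lexLe x y`: `x ≤_lex y`, i.e. `x = y` or `x i < y i` at the first index `i`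
where `x` and `y` differ. -/
def lexLe {n : ℕ} {α : Type*} [LinearOrder α] (x y : Fin n → α) : Prop :=
  x = y ∨ ∃ i, (∀ j, j < i → x j = y j) ∧ x i < y i

/-- Strict lexicographic order. -/
def lexLt {n : ℕ} {α : Type*} [LinearOrder α] (x y : Fin n → α) : Prop :=
  lexLe x y ∧ x ≠ y

/-- `v` is an upper bound of `X` w.r.t. the lexicographic order. -/
def IsLexUB {n : ℕ} {α : Type*} [LinearOrder α] (X : Set (Fin n → α)) (v : Fin n → α) : Prop :=
  ∀ x ∈ X, lexLe x v

def IsLexLB {n : ℕ} {α : Type*} [LinearOrder α] (X : Set (Fin n → α)) (v : Fin n → α) : Prop :=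
  ∀ x ∈ X, lexLe v x

/-- `v` is the least upper bound (supremum) of `X` w.r.t. the lexicographic order. -/
def IsLexLUB {n : ℕ} {α : Type*} [LinearOrder α] (X : Set (Fin n → α)) (v : Fin n → α) : Prop :=
  IsLexUB X v ∧ ∀ u, IsLexUB X u → lexLe v u

/-- `v` is the greatest lower bound (infimum) of `X` w.r.t. the lexicographic order. -/
def IsLexGLB {n : ℕ} {α : Type*} [LinearOrder α] (X : Set (Fin n → α)) (v : Fin n → α) : Prop :=
  IsLexLB X v ∧ ∀ u, IsLexLB X u → lexLe u v

/-! ### Stochastic games -/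

/-- A (simple) stochastic game over a finite state space `S` and a finite label set `L`:
a partition of states into Max-states and Min-states, finitely many available actions
at every state, and a transition probability function. -/
structure SG (S L : Type) [Fintype S] [Fintype L] where
  isMax : S → Prop
  Act : S → Finset L
  act_nonempty : ∀ s, (Act s).Nonempty
  P : S → L → S → ℝ
  P_nonneg : ∀ s a s', 0 ≤ P s a s'
  P_sum : ∀ s, ∀ a ∈ Act s, ∑ s', P s a s' = 1

variable {S L : Type} [Fintype S] [DecidableEq S] [Fintype L] [DecidableEq L]

/-- A (randomized, history-dependent) strategy: a map from finite histories
`(S × L)* × S` to probability distributions over the available actions. -/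
structure Strategy (G : SG S L) where
  prob : List (S × L) → S → L → ℝ
  nonneg : ∀ h s a, 0 ≤ prob h s a
  sum_one : ∀ h s, ∑ a ∈ G.Act s, prob h s a = 1
  supp : ∀ h s a, a ∉ G.Act s → prob h s a = 0

/-- A strategy is memoryless if it only depends on the current state. -/
def Strategy.Memoryless {G : SG S L} (σ : Strategy G) : Prop :=
  ∀ h h' s, σ.prob h s = σ.prob h' s

/-- A strategy is deterministic if every choice is Dirac. -/
def Strategy.Deterministic {G : SG S L} (σ : Strategy G) : Prop :=
  ∀ h s, ∃ a, σ.prob h s a = 1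

/-- Memoryless deterministic strategies. -/
def Strategy.MD {G : SG S L} (σ : Strategy G) : Prop :=
  σ.Memoryless ∧ σ.Deterministic

/-- The probability that action `a` is played at state `s` after history `h`
when Max plays `σ` and Min plays `τ`. -/
noncomputable def stepProb (G : SG S L) (σ τ : Strategy G) (h : List (S × L)) (s : S)
    (a : L) : ℝ :=
  if G.isMax s then σ.prob h s a else τ.prob h s a

/-- Probability, in the Markov chain induced by `σ` and `τ`, of reaching the set `T`
within `k` steps, starting at state `s` with history `h`. -/
noncomputable def reachAux (G : SG S L) (σ τ : Strategy G) (T : Finset S) :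
    ℕ → List (S × L) → S → ℝ
  | 0, _, s => if s ∈ T then 1 else 0
  | k + 1, h, s =>
      if s ∈ T then 1
      else ∑ a ∈ G.Act s, stepProb G σ τ h s a *
        ∑ s', G.P s a s' * reachAux G σ τ T k (h ++ [(s, a)]) s'

/-- `P_{h,s}^{σ,τ}(Reach T)`: the probability of the reachability property `Reach T`
(the measure of the set of infinite paths that eventually visit `T`), obtained as the
supremum of the step-bounded reachability probabilities. -/
noncomputable def PReach (G : SG S L) (σ τ : Strategy G) (T : Finset S)
    (h : List (S × L)) (s : S) : ℝ :=
  ⨆ k : ℕ, reachAux G σ τ T k h s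

/-- Probability of `A Until t` (reach `t` while only visiting states of `A` before)
within `k` steps. -/
noncomputable def untilAux (G : SG S L) (σ τ : Strategy G) (A : Finset S) (t : S) :
    ℕ → List (S × L) → S → ℝ
  | 0, _, s => if s = t then 1 else 0
  | k + 1, h, s =>
      if s = t then 1
      else if s ∈ A then
        ∑ a ∈ G.Act s, stepProb G σ τ h s a *
          ∑ s', G.P s a s' * untilAux G σ τ A t k (h ++ [(s, a)]) s'
      else 0

/-- `P_{h,s}^{σ,τ}(A Until t)`. -/
noncomputable def PUntil (G : SG S L) (σ τ : Strategy G) (A : Finset S) (t : S)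
    (h : List (S × L)) (s : S) : ℝ :=
  ⨆ k : ℕ, untilAux G σ τ A t k h s

/-- Objectives: reachability `Reach T`, safety `Safe T`, and their quantified
versions given by a weight function `q` on a target set `S'`. -/
inductive Obj (S : Type) where
  | reach (T : Finset S)
  | safe (T : Finset S)
  | qreach (S' : Finset S) (q : S → ℝ)
  | qsafe (S' : Finset S) (q : S → ℝ)

/-- The target set of an objective. -/
def Obj.targets {S : Type} : Obj S → Finset S
  | .reach T => T
  | .safe T => T
  | .qreach S' _ => S'
  | .qsafe S' _ => S'

/-- Plain (non-quantified) objectives: `Reach T` or `Safe T`. -/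
def Obj.Plain {S : Type} : Obj S → Prop
  | .reach _ => True
  | .safe _ => True
  | _ => False

/-- Reachability-type objectives. -/
def Obj.IsReach {S : Type} : Obj S → Prop
  | .reach _ => True
  | .qreach _ _ => True
  | _ => False

/-- `P_{h,s}^{σ,τ}(Ω)` for a single objective `Ω`. -/
noncomputable def objProb (G : SG S L) (σ τ : Strategy G) (h : List (S × L)) (s : S) :
    Obj S → ℝ
  | .reach T => PReach G σ τ T h s
  | .safe T => 1 - PReach G σ τ T h s
  | .qreach S' q => ∑ t ∈ S', PUntil G σ τ S'ᶜ t h s * q t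
  | .qsafe S' q => 1 - ∑ t ∈ S', PUntil G σ τ S'ᶜ t h s * q t

/-- The vector `(P_{h,s}^{σ,τ}(Ω_1),…,P_{h,s}^{σ,τ}(Ω_n))`. -/
noncomputable def payoff (G : SG S L) {n : ℕ} (Ω : Fin n → Obj S) (σ τ : Strategy G)
    (h : List (S × L)) (s : S) : Fin n → ℝ :=
  fun i => objProb G σ τ h s (Ω i)

/-- The set of payoff vectors achievable by Min against a fixed `σ` from state `s`. -/
def minPayoffs (G : SG S L) {n : ℕ} (Ω : Fin n → Obj S) (σ : Strategy G) (s : S) :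
    Set (Fin n → ℝ) :=
  {y | ∃ τ : Strategy G, y = payoff G Ω σ τ [] s}

/-- The set of payoff vectors achievable by Max against a fixed `τ` from state `s`. -/
def maxPayoffs (G : SG S L) {n : ℕ} (Ω : Fin n → Obj S) (τ : Strategy G) (s : S) :
    Set (Fin n → ℝ) :=
  {y | ∃ σ : Strategy G, y = payoff G Ω σ τ [] s}

/-- `v` is the (lower) lex-value `sup_σ inf_τ P_s^{σ,τ}(Ω)` of state `s`, where the
suprema and infima are taken w.r.t. the lexicographic order. -/
def IsLexValue (G : SG S L) {n : ℕ} (Ω : Fin n → Obj S) (s : S) (v : Fin n → ℝ) : Prop :=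
  IsLexLUB {x | ∃ σ : Strategy G, IsLexGLB (minPayoffs G Ω σ s) x} v

/-- `v` is the upper lex-value `inf_τ sup_σ P_s^{σ,τ}(Ω)` of state `s`. -/
def IsLexValueUpper (G : SG S L) {n : ℕ} (Ω : Fin n → Obj S) (s : S) (v : Fin n → ℝ) :
    Prop :=
  IsLexGLB {x | ∃ τ : Strategy G, IsLexLUB (maxPayoffs G Ω τ s) x} v

/-- `σ` is a lex-optimal strategy of Max: from every state `s` (with empty history) it
guarantees the lex-value `v s` against every strategy of Min,
i.e. `inf_τ P_s^{σ,τ}(Ω) = v s` in the lexicographic order. -/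
def MaxOptimal (G : SG S L) {n : ℕ} (Ω : Fin n → Obj S) (σ : Strategy G)
    (v : S → Fin n → ℝ) : Prop :=
  ∀ s, IsLexGLB (minPayoffs G Ω σ s) (v s)

/-- `τ` is a lex-optimal strategy of Min: `sup_σ P_s^{σ,τ}(Ω) = v s`. -/
def MinOptimal (G : SG S L) {n : ℕ} (Ω : Fin n → Obj S) (τ : Strategy G)
    (v : S → Fin n → ℝ) : Prop :=
  ∀ s, IsLexLUB (maxPayoffs G Ω τ s) (v s)

/-- `τ` is a lex-optimal counter-strategy against `σ`:
`P_s^{σ,τ}(Ω) = inf_{τ'} P_s^{σ,τ'}(Ω)` for every `s`. -/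
def OptimalCounter (G : SG S L) {n : ℕ} (Ω : Fin n → Obj S) (σ τ : Strategy G) : Prop :=
  ∀ s, IsLexGLB (minPayoffs G Ω σ s) (payoff G Ω σ τ [] s)

/-- A state is absorbing (a sink) if all its actions self-loop with probability 1. -/
def SG.Absorbing (G : SG S L) (s : S) : Prop := ∀ a ∈ G.Act s, G.P s a s = 1

/-- A lex-objective is absorbing if all its target sets consist of sinks only. -/
def AbsorbingObj (G : SG S L) {n : ℕ} (Ω : Fin n → Obj S) : Prop :=
  ∀ i, ∀ t ∈ (Ω i).targets, G.Absorbing t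

/-- The lex-value of action `a` at state `s`: `v(s,a) = Σ_{s'} P(s,a,s')·v(s')`. -/
noncomputable def actionVal (G : SG S L) {n : ℕ} (v : S → Fin n → ℝ) (s : S) (a : L) :
    Fin n → ℝ :=
  fun i => ∑ s', G.P s a s' * v s' i

/-- Action `a` is lex-optimal at `s`: its lex-value is maximal among the available
actions if `s` is a Max-state, and minimal if `s` is a Min-state. -/
def OptAction (G : SG S L) {n : ℕ} (v : S → Fin n → ℝ) (s : S) (a : L) : Prop :=
  (G.isMax s → ∀ b ∈ G.Act s, lexLe (actionVal G v s b) (actionVal G v s a)) ∧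
  (¬ G.isMax s → ∀ b ∈ G.Act s, lexLe (actionVal G v s a) (actionVal G v s b))

/-- A strategy of Max is locally lex-optimal if at Max-states it only assigns positive
probability to lex-optimal actions. -/
def LocallyOptMax (G : SG S L) {n : ℕ} (v : S → Fin n → ℝ) (σ : Strategy G) : Prop :=
  ∀ h s a, G.isMax s → 0 < σ.prob h s a → OptAction G v s a

/-- A strategy of Min is locally lex-optimal if at Min-states it only assigns positive
probability to lex-optimal actions. -/
def LocallyOptMin (G : SG S L) {n : ℕ} (v : S → Fin n → ℝ) (τ : Strategy G) : Prop :=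
  ∀ h s a, ¬ G.isMax s → 0 < τ.prob h s a → OptAction G v s a

/-- `Zero_i = {s ∈ S : v_i(s) = 0}`. -/
noncomputable def zeroSet {n : ℕ} (v : S → Fin n → ℝ) (i : Fin n) : Finset S :=
  Finset.univ.filter (fun s => v s i = 0)

/-- The final set `F = ⋃_{k∈R} S_k ∪ ⋂_{k∈R} Zero_k`, where `R` is the set of indices
of reachability objectives (with `F = S` when `R = ∅`). -/
noncomputable def finalSet {n : ℕ} (Ω : Fin n → Obj S) (v : S → Fin n → ℝ) : Finset S :=
  ((Finset.univ.filter (fun i => (Ω i).IsReach)).biUnion fun i => (Ω i).targets) ∪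
    Finset.univ.filter fun s => ∀ i, (Ω i).IsReach → v s i = 0


/-! ### Auxiliary lemmas: lexicographic order -/

section LexAux

variable {n : ℕ}

theorem lexLe_refl (x : Fin n → ℝ) : lexLe x x := Or.inl rfl

theorem lexLe_trans {x y z : Fin n → ℝ} (h1 : lexLe x y) (h2 : lexLe y z) : lexLe x z := by
  rcases h1 with rfl | ⟨i, hi, hxi⟩
  · exact h2
  rcases h2 with rfl | ⟨i', hi', hyi⟩
  · exact Or.inr ⟨i, hi, hxi⟩
  rcases lt_trichotomy i i' with h | h | h
  · exact Or.inr ⟨i, fun j hj => (hi j hj).trans (hi' j (hj.trans h)),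
      hxi.trans_le (le_of_eq (hi' i h))⟩
  · subst h
    exact Or.inr ⟨i, fun j hj => (hi j hj).trans (hi' j hj), hxi.trans hyi⟩
  · exact Or.inr ⟨i', fun j hj => (hi j (hj.trans h)).trans (hi' j hj),
      by rw [hi i' h]; exact hyi⟩

theorem lex_trichotomy (x y : Fin n → ℝ) :
    x = y ∨ (∃ i, (∀ j, j < i → x j = y j) ∧ x i < y i) ∨
      (∃ i, (∀ j, j < i → y j = x j) ∧ y i < x i) := by
  by_cases hxy : x = y
  · exact Or.inl hxy
  · have hne : (Finset.univ.filter (fun i => x i ≠ y i)).Nonempty := by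
      rcases Function.ne_iff.mp hxy with ⟨i, hi⟩
      exact ⟨i, by simp [hi]⟩
    set i0 := (Finset.univ.filter (fun i => x i ≠ y i)).min' hne with hi0
    have hmem : x i0 ≠ y i0 := by
      have := Finset.min'_mem _ hne
      simpa [← hi0] using this
    have hlt : ∀ j, j < i0 → x j = y j := by
      intro j hj
      by_contra hne'
      have : i0 ≤ j := Finset.min'_le _ _ (by simp [hne'])
      exact absurd hj (not_lt.mpr this)
    rcases lt_or_gt_of_ne hmem with h | h
    · exact Or.inr (Or.inl ⟨i0, hlt, h⟩)
    · exact Or.inr (Or.inr ⟨i0, fun j hj => (hlt j hj).symm, h⟩)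

/-- Certification of `lexLe` via weighted sums with arbitrarily small weights. -/
theorem lexLe_of_eps {x y : Fin n → ℝ} (hbd : ∀ i, -1 ≤ x i - y i)
    (h : ∀ δ : ℝ, 0 < δ → ∃ ε : ℝ, 0 < ε ∧ ε ≤ δ ∧
      ∑ i : Fin n, ε ^ ((i : ℕ) + 1) * x i ≤ ∑ i : Fin n, ε ^ ((i : ℕ) + 1) * y i) :
    lexLe x y := by
  rcases lex_trichotomy x y with h' | h' | h'
  · exact Or.inl h'
  · exact Or.inr h'
  obtain ⟨i0, hi0, hlt⟩ := h'
  exfalso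
  set Δ := x i0 - y i0 with hΔ
  have hΔpos : 0 < Δ := sub_pos.mpr hlt
  have hδpos : (0:ℝ) < min (Δ / (2 * (n + 1))) 1 := by positivity
  obtain ⟨ε, hε0, hεδ, hsum⟩ := h _ hδpos
  have hε1 : ε ≤ 1 := hεδ.trans (min_le_right _ _)
  have hεΔ : ε ≤ Δ / (2 * (n + 1)) := hεδ.trans (min_le_left _ _)
  have hsum' : ∑ i : Fin n, ε ^ ((i : ℕ) + 1) * (x i - y i) ≤ 0 := by
    have heq : ∑ i : Fin n, ε ^ ((i : ℕ) + 1) * (x i - y i)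
        = ∑ i : Fin n, ε ^ ((i : ℕ) + 1) * x i - ∑ i : Fin n, ε ^ ((i : ℕ) + 1) * y i := by
      rw [← Finset.sum_sub_distrib]
      exact Finset.sum_congr rfl fun i _ => by ring
    rw [heq]
    exact sub_nonpos.mpr hsum
  -- term-wise lower bound
  have hterm : ∀ i : Fin n,
      (if i = i0 then ε ^ ((i0 : ℕ) + 1) * Δ else 0) + -(ε ^ ((i0 : ℕ) + 2))
        ≤ ε ^ ((i : ℕ) + 1) * (x i - y i) := by
    intro i
    have hpow2 : (0:ℝ) ≤ ε ^ ((i0 : ℕ) + 2) := by positivity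
    by_cases hii : i = i0
    · subst hii
      rw [if_pos rfl]
      simp only [← hΔ]
      linarith [hpow2]
    · simp only [if_neg hii, zero_add]
      rcases lt_trichotomy i i0 with hc | hc | hc
      · rw [hi0 i hc, sub_self, mul_zero]
        linarith
      · exact absurd hc hii
      · have h1 : ε ^ ((i : ℕ) + 1) ≤ ε ^ ((i0 : ℕ) + 2) := by
          apply pow_le_pow_of_le_one hε0.le hε1
          have : (i0 : ℕ) < (i : ℕ) := hc
          omega
        have h2 := hbd i
        have hp : (0:ℝ) < ε ^ ((i : ℕ) + 1) := pow_pos hε0 _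
        nlinarith
  have hlb : ε ^ ((i0 : ℕ) + 1) * Δ - (n : ℝ) * ε ^ ((i0 : ℕ) + 2)
      ≤ ∑ i : Fin n, ε ^ ((i : ℕ) + 1) * (x i - y i) := by
    refine le_trans (le_of_eq ?_) (Finset.sum_le_sum fun i _ => hterm i)
    rw [Finset.sum_add_distrib, Finset.sum_ite_eq' Finset.univ i0]
    simp only [Finset.mem_univ, if_true, Finset.sum_const, Finset.card_univ, Fintype.card_fin,
      nsmul_eq_mul, mul_neg]
    ring
  have key : (n : ℝ) * ε ≤ Δ / 2 := by
    have h1 : (n:ℝ) * ε ≤ (n:ℝ) * (Δ / (2*(n+1))) :=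
      mul_le_mul_of_nonneg_left hεΔ (Nat.cast_nonneg n)
    have h2 : (n:ℝ) * (Δ / (2*(n+1))) ≤ Δ / 2 := by
      rw [mul_div_assoc', div_le_div_iff₀ (by positivity) two_pos]
      nlinarith [hΔpos, Nat.cast_nonneg (α := ℝ) n]
    exact h1.trans h2
  have hfin : ε ^ ((i0 : ℕ) + 1) * (Δ - (n : ℝ) * ε) ≤ 0 := by
    have : ε ^ ((i0 : ℕ) + 2) = ε ^ ((i0 : ℕ) + 1) * ε := by ring
    nlinarith [hlb, hsum']
  have hp : (0:ℝ) < ε ^ ((i0 : ℕ) + 1) := pow_pos hε0 _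
  nlinarith [hfin, key, hΔpos]

end LexAux

/-! ### Auxiliary lemmas: basic SG facts -/

set_option linter.unusedSectionVars false
section SGAux

variable {G : SG S L}

theorem stepProb_nonneg (σ τ : Strategy G) (h : List (S × L)) (s : S) (a : L) :
    0 ≤ stepProb G σ τ h s a := by
  unfold stepProb; split
  · exact σ.nonneg h s a
  · exact τ.nonneg h s a

theorem stepProb_sum (σ τ : Strategy G) (h : List (S × L)) (s : S) :
    ∑ a ∈ G.Act s, stepProb G σ τ h s a = 1 := by
  unfold stepProb
  by_cases hs : G.isMax s
  · simp only [if_pos hs]; exact σ.sum_one h s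
  · simp only [if_neg hs]; exact τ.sum_one h s

theorem comb_le (σ τ : Strategy G) (h : List (S × L)) (s : S) (X : L → ℝ) (c : ℝ)
    (hX : ∀ a ∈ G.Act s, X a ≤ c) :
    ∑ a ∈ G.Act s, stepProb G σ τ h s a * X a ≤ c := by
  calc ∑ a ∈ G.Act s, stepProb G σ τ h s a * X a
      ≤ ∑ a ∈ G.Act s, stepProb G σ τ h s a * c :=
        Finset.sum_le_sum fun a ha =>
          mul_le_mul_of_nonneg_left (hX a ha) (stepProb_nonneg σ τ h s a)
    _ = c := by rw [← Finset.sum_mul, stepProb_sum, one_mul]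

theorem le_comb (σ τ : Strategy G) (h : List (S × L)) (s : S) (X : L → ℝ) (c : ℝ)
    (hX : ∀ a ∈ G.Act s, c ≤ X a) :
    c ≤ ∑ a ∈ G.Act s, stepProb G σ τ h s a * X a := by
  calc c = ∑ a ∈ G.Act s, stepProb G σ τ h s a * c := by
        rw [← Finset.sum_mul, stepProb_sum, one_mul]
    _ ≤ ∑ a ∈ G.Act s, stepProb G σ τ h s a * X a :=
        Finset.sum_le_sum fun a ha =>
          mul_le_mul_of_nonneg_left (hX a ha) (stepProb_nonneg σ τ h s a)

theorem comb_mono (σ τ : Strategy G) (h : List (S × L)) (s : S) (X Y : L → ℝ)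
    (hXY : ∀ a ∈ G.Act s, X a ≤ Y a) :
    ∑ a ∈ G.Act s, stepProb G σ τ h s a * X a ≤ ∑ a ∈ G.Act s, stepProb G σ τ h s a * Y a :=
  Finset.sum_le_sum fun a ha =>
    mul_le_mul_of_nonneg_left (hXY a ha) (stepProb_nonneg σ τ h s a)

theorem row_le {s : S} {a : L} (ha : a ∈ G.Act s) (X : S → ℝ) (c : ℝ)
    (hX : ∀ s', X s' ≤ c) : ∑ s', G.P s a s' * X s' ≤ c := by
  calc ∑ s', G.P s a s' * X s' ≤ ∑ s', G.P s a s' * c :=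
        Finset.sum_le_sum fun s' _ => mul_le_mul_of_nonneg_left (hX s') (G.P_nonneg s a s')
    _ = c := by rw [← Finset.sum_mul, G.P_sum s a ha, one_mul]

theorem le_row {s : S} {a : L} (ha : a ∈ G.Act s) (X : S → ℝ) (c : ℝ)
    (hX : ∀ s', c ≤ X s') : c ≤ ∑ s', G.P s a s' * X s' := by
  calc c = ∑ s', G.P s a s' * c := by rw [← Finset.sum_mul, G.P_sum s a ha, one_mul]
    _ ≤ ∑ s', G.P s a s' * X s' :=
        Finset.sum_le_sum fun s' _ => mul_le_mul_of_nonneg_left (hX s') (G.P_nonneg s a s')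

theorem row_mono (s : S) (a : L) (X Y : S → ℝ) (hXY : ∀ s', X s' ≤ Y s') :
    ∑ s', G.P s a s' * X s' ≤ ∑ s', G.P s a s' * Y s' :=
  Finset.sum_le_sum fun s' _ => mul_le_mul_of_nonneg_left (hXY s') (G.P_nonneg s a s')

theorem row_nonneg (s : S) (a : L) (X : S → ℝ) (hX : ∀ s', 0 ≤ X s') :
    0 ≤ ∑ s', G.P s a s' * X s' :=
  Finset.sum_nonneg fun s' _ => mul_nonneg (G.P_nonneg s a s') (hX s')

theorem P_absorbing_ne {s : S} (hs : G.Absorbing s) {a : L} (ha : a ∈ G.Act s)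
    {s' : S} (hne : s' ≠ s) : G.P s a s' = 0 := by
  have hsum := G.P_sum s a ha
  have h1 := hs a ha
  have herase : ∑ t ∈ Finset.univ.erase s, G.P s a t = 0 := by
    have := Finset.sum_erase_add Finset.univ (fun t => G.P s a t) (Finset.mem_univ s)
    rw [hsum] at this
    linarith [h1, this]
  have := (Finset.sum_eq_zero_iff_of_nonneg
    (fun t _ => G.P_nonneg s a t)).mp herase s' (Finset.mem_erase.mpr ⟨hne, Finset.mem_univ s'⟩)
  exact this

theorem row_absorbing {s : S} (hs : G.Absorbing s) {a : L} (ha : a ∈ G.Act s) (X : S → ℝ) :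
    ∑ s', G.P s a s' * X s' = X s := by
  have : ∀ s' ∈ Finset.univ, G.P s a s' * X s' = if s' = s then X s else 0 := by
    intro s' _
    by_cases h : s' = s
    · subst h; rw [if_pos rfl, hs a ha, one_mul]
    · rw [if_neg h, P_absorbing_ne hs ha h, zero_mul]
  rw [Finset.sum_congr rfl this, Finset.sum_ite_eq' Finset.univ s (fun _ => X s)]
  simp

/-- The MD strategy determined by a choice of one action per state. -/
def mkMD (G : SG S L) (c : S → L) (hc : ∀ s, c s ∈ G.Act s) : Strategy G where
  prob := fun _ s a => if a = c s then 1 else 0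
  nonneg := by intro h s a; split <;> norm_num
  sum_one := by
    intro h s
    rw [Finset.sum_ite_eq' (G.Act s) (c s) (fun _ => (1:ℝ))]
    simp [hc s]
  supp := by
    intro h s a ha
    by_cases h' : a = c s
    · subst h'; exact absurd (hc s) ha
    · simp [h']

theorem mkMD_MD (G : SG S L) (c : S → L) (hc : ∀ s, c s ∈ G.Act s) : (mkMD G c hc).MD :=
  ⟨fun _ _ _ => rfl, fun h s => ⟨c s, by simp [mkMD]⟩⟩

theorem comb_mkMD_max (c : S → L) (hc : ∀ s, c s ∈ G.Act s) (τ : Strategy G)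
    (h : List (S × L)) {s : S} (hs : G.isMax s) (X : L → ℝ) :
    ∑ a ∈ G.Act s, stepProb G (mkMD G c hc) τ h s a * X a = X (c s) := by
  unfold stepProb
  simp only [if_pos hs, mkMD]
  have : ∀ a ∈ G.Act s, (if a = c s then (1:ℝ) else 0) * X a = if a = c s then X a else 0 := by
    intro a _; split <;> simp
  rw [Finset.sum_congr rfl this, Finset.sum_ite_eq' (G.Act s) (c s) X]
  simp [hc s]

theorem comb_mkMD_min (c : S → L) (hc : ∀ s, c s ∈ G.Act s) (σ : Strategy G)
    (h : List (S × L)) {s : S} (hs : ¬ G.isMax s) (X : L → ℝ) :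
    ∑ a ∈ G.Act s, stepProb G σ (mkMD G c hc) h s a * X a = X (c s) := by
  unfold stepProb
  simp only [if_neg hs, mkMD]
  have : ∀ a ∈ G.Act s, (if a = c s then (1:ℝ) else 0) * X a = if a = c s then X a else 0 := by
    intro a _; split <;> simp
  rw [Finset.sum_congr rfl this, Finset.sum_ite_eq' (G.Act s) (c s) X]
  simp [hc s]

end SGAux

/-! ### Auxiliary lemmas: reachability -/

set_option linter.unusedSectionVars false

section ReachAux

open Filter Topology

variable {G : SG S L} (σ τ : Strategy G) (T : Finset S)

theorem reachAux_mem {s : S} (hs : s ∈ T) (k : ℕ) (h : List (S × L)) :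
    reachAux G σ τ T k h s = 1 := by
  cases k <;> simp [reachAux, hs]

theorem reachAux_nonneg : ∀ k h s, 0 ≤ reachAux G σ τ T k h s := by
  intro k
  induction k with
  | zero => intro h s; simp only [reachAux]; split <;> norm_num
  | succ k ih =>
    intro h s
    simp only [reachAux]
    split
    · norm_num
    · refine Finset.sum_nonneg fun a ha => mul_nonneg (stepProb_nonneg σ τ h s a) ?_
      exact row_nonneg s a _ (fun s' => ih _ s')

theorem reachAux_le_one : ∀ k h s, reachAux G σ τ T k h s ≤ 1 := by
  intro k
  induction k with
  | zero => intro h s; simp only [reachAux]; split <;> norm_num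
  | succ k ih =>
    intro h s
    simp only [reachAux]
    split
    · norm_num
    · exact comb_le σ τ h s _ 1 fun a ha => row_le ha _ 1 fun s' => ih _ s'

theorem reachAux_succ_le : ∀ k h s, reachAux G σ τ T k h s ≤ reachAux G σ τ T (k+1) h s := by
  intro k
  induction k with
  | zero =>
    intro h s
    by_cases hs : s ∈ T
    · rw [reachAux_mem σ τ T hs, reachAux_mem σ τ T hs]
    · simp only [reachAux, if_neg hs]
      refine Finset.sum_nonneg fun a ha => mul_nonneg (stepProb_nonneg σ τ h s a) ?_
      exact row_nonneg s a _ (fun s' => reachAux_nonneg σ τ T 0 (h ++ [(s,a)]) s')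
  | succ k ih =>
    intro h s
    by_cases hs : s ∈ T
    · rw [reachAux_mem σ τ T hs, reachAux_mem σ τ T hs]
    · show reachAux G σ τ T (k+1) h s ≤ reachAux G σ τ T (k+2) h s
      simp only [reachAux, if_neg hs]
      exact comb_mono σ τ h s _ _ fun a ha => row_mono s a _ _ fun s' => ih _ s'

theorem reachAux_mono {k k' : ℕ} (hk : k ≤ k') (h : List (S × L)) (s : S) :
    reachAux G σ τ T k h s ≤ reachAux G σ τ T k' h s := by
  induction k' with
  | zero => rw [Nat.le_zero.mp hk]
  | succ k' ih =>
    rcases Nat.lt_or_ge k (k'+1) with h' | h'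
    · exact (ih (Nat.lt_succ_iff.mp h')).trans (reachAux_succ_le σ τ T k' h s)
    · have : k = k' + 1 := le_antisymm hk h'
      rw [this]

theorem reachAux_sink {s : S} (hs : G.Absorbing s) (hsT : s ∉ T) :
    ∀ k h, reachAux G σ τ T k h s = 0 := by
  intro k
  induction k with
  | zero => intro h; simp [reachAux, hsT]
  | succ k ih =>
    intro h
    simp only [reachAux, if_neg hsT]
    have : ∀ a ∈ G.Act s,
        stepProb G σ τ h s a * ∑ s', G.P s a s' * reachAux G σ τ T k (h ++ [(s,a)]) s'
          = stepProb G σ τ h s a * 0 := by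
      intro a ha
      rw [row_absorbing hs ha, ih]
    rw [Finset.sum_congr rfl this]
    simp

theorem reachAux_split {D B : Finset S} (hD : ∀ t ∈ D, G.Absorbing t) (hBD : B ⊆ D) :
    ∀ k h s, reachAux G σ τ D k h s
      = reachAux G σ τ B k h s + reachAux G σ τ (D \ B) k h s := by
  intro k
  induction k with
  | zero =>
    intro h s
    simp only [reachAux]
    by_cases hsB : s ∈ B
    · rw [if_pos (hBD hsB), if_pos hsB, if_neg (by simp [hsB])]
      norm_num
    · by_cases hsD : s ∈ D
      · rw [if_pos hsD, if_neg hsB, if_pos (Finset.mem_sdiff.mpr ⟨hsD, hsB⟩)]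
        norm_num
      · rw [if_neg hsD, if_neg hsB, if_neg (by simp [hsD])]
        norm_num
  | succ k ih =>
    intro h s
    by_cases hsB : s ∈ B
    · rw [reachAux_mem σ τ D (hBD hsB), reachAux_mem σ τ B hsB,
        reachAux_sink σ τ (D \ B) (hD s (hBD hsB)) (by simp [hsB])]
      norm_num
    · by_cases hsD : s ∈ D
      · rw [reachAux_mem σ τ D hsD,
          reachAux_mem σ τ (D \ B) (Finset.mem_sdiff.mpr ⟨hsD, hsB⟩),
          reachAux_sink σ τ B (hD s hsD) hsB]
        norm_num
      · have hsDB : s ∉ D \ B := by simp [hsD]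
        simp only [reachAux, if_neg hsD, if_neg hsB, if_neg hsDB]
        rw [← Finset.sum_add_distrib]
        refine Finset.sum_congr rfl fun a ha => ?_
        rw [← mul_add, ← Finset.sum_add_distrib]
        congr 1
        refine Finset.sum_congr rfl fun s' _ => ?_
        rw [← mul_add, ih]

theorem reachAux_bdd (h : List (S × L)) (s : S) :
    BddAbove (Set.range (fun k => reachAux G σ τ T k h s)) := by
  refine ⟨1, ?_⟩
  rintro x ⟨k', rfl⟩
  exact reachAux_le_one σ τ T k' h s

theorem reachAux_le_PReach (k : ℕ) (h : List (S × L)) (s : S) :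
    reachAux G σ τ T k h s ≤ PReach G σ τ T h s :=
  le_ciSup (reachAux_bdd σ τ T h s) k

theorem PReach_nonneg (h : List (S × L)) (s : S) : 0 ≤ PReach G σ τ T h s :=
  le_trans (reachAux_nonneg σ τ T 0 h s) (reachAux_le_PReach σ τ T 0 h s)

theorem PReach_le_one (h : List (S × L)) (s : S) : PReach G σ τ T h s ≤ 1 :=
  ciSup_le fun k => reachAux_le_one σ τ T k h s

theorem tendsto_reachAux (h : List (S × L)) (s : S) :
    Tendsto (fun k => reachAux G σ τ T k h s) atTop (𝓝 (PReach G σ τ T h s)) :=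
  tendsto_atTop_ciSup (fun k k' hk => reachAux_mono σ τ T hk h s) (reachAux_bdd σ τ T h s)

theorem PReach_split {D B : Finset S} (hD : ∀ t ∈ D, G.Absorbing t) (hBD : B ⊆ D)
    (h : List (S × L)) (s : S) :
    PReach G σ τ D h s = PReach G σ τ B h s + PReach G σ τ (D \ B) h s := by
  refine tendsto_nhds_unique (tendsto_reachAux σ τ D h s) ?_
  have := (tendsto_reachAux σ τ B h s).add (tendsto_reachAux σ τ (D \ B) h s)
  refine Tendsto.congr (fun k => (reachAux_split σ τ hD hBD k h s).symm) this

end ReachAux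

/-! ### Discounted value recursion `Zq` -/

section ZqAux

open Filter Topology

/-- The `k`-step `lam`-discounted value with terminal reward `ρ` on the absorbing
set `D` and running (survival) reward `(1-lam) * g` per step. -/
noncomputable def Zq (G : SG S L) (σ τ : Strategy G) (D : Finset S) (ρ : S → ℝ)
    (g lam : ℝ) : ℕ → List (S × L) → S → ℝ
  | 0, _, _ => 0
  | k + 1, h, s =>
      if s ∈ D then ρ s
      else (1 - lam) * g + lam * ∑ a ∈ G.Act s, stepProb G σ τ h s a *
        ∑ s', G.P s a s' * Zq G σ τ D ρ g lam k (h ++ [(s, a)]) s'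

variable {G : SG S L} (σ τ : Strategy G) (D : Finset S) (ρ : S → ℝ) (g lam : ℝ)

theorem Zq_succ_eq (k : ℕ) (h : List (S × L)) (s : S) :
    Zq G σ τ D ρ g lam (k + 1) h s
      = if s ∈ D then ρ s
        else (1 - lam) * g + lam * ∑ a ∈ G.Act s, stepProb G σ τ h s a *
          ∑ s', G.P s a s' * Zq G σ τ D ρ g lam k (h ++ [(s, a)]) s' := rfl

theorem Zq_nonneg (hρ0 : ∀ t, 0 ≤ ρ t) (hg0 : 0 ≤ g) (hlam0 : 0 ≤ lam) (hlam1 : lam ≤ 1) :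
    ∀ k h s, 0 ≤ Zq G σ τ D ρ g lam k h s := by
  intro k
  induction k with
  | zero => intro h s; simp [Zq]
  | succ k ih =>
    intro h s
    simp only [Zq]
    split
    · exact hρ0 s
    · have h1 : (0:ℝ) ≤ (1 - lam) * g := mul_nonneg (by linarith) hg0
      have h2 : (0:ℝ) ≤ ∑ a ∈ G.Act s, stepProb G σ τ h s a *
          ∑ s', G.P s a s' * Zq G σ τ D ρ g lam k (h ++ [(s, a)]) s' :=
        Finset.sum_nonneg fun a _ => mul_nonneg (stepProb_nonneg σ τ h s a)
          (row_nonneg s a _ fun s' => ih _ s')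
      nlinarith

theorem Zq_le_one (hρ1 : ∀ t, ρ t ≤ 1) (hg1 : g ≤ 1) (hlam0 : 0 ≤ lam) (hlam1 : lam ≤ 1) :
    ∀ k h s, Zq G σ τ D ρ g lam k h s ≤ 1 := by
  intro k
  induction k with
  | zero => intro h s; simp [Zq]
  | succ k ih =>
    intro h s
    simp only [Zq]
    split
    · exact hρ1 s
    · have h2 : ∑ a ∈ G.Act s, stepProb G σ τ h s a *
          ∑ s', G.P s a s' * Zq G σ τ D ρ g lam k (h ++ [(s, a)]) s' ≤ 1 :=
        comb_le σ τ h s _ 1 fun a ha => row_le ha _ 1 fun s' => ih _ s'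
      nlinarith

theorem Zq_succ_le (hρ0 : ∀ t, 0 ≤ ρ t) (hg0 : 0 ≤ g) (hlam0 : 0 ≤ lam) (hlam1 : lam ≤ 1) :
    ∀ k h s, Zq G σ τ D ρ g lam k h s ≤ Zq G σ τ D ρ g lam (k + 1) h s := by
  intro k
  induction k with
  | zero => intro h s; exact Zq_nonneg σ τ D ρ g lam hρ0 hg0 hlam0 hlam1 1 h s
  | succ k ih =>
    intro h s
    rw [Zq_succ_eq σ τ D ρ g lam (k+1) h s, Zq_succ_eq σ τ D ρ g lam k h s]
    by_cases hsD : s ∈ D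
    · rw [if_pos hsD, if_pos hsD]
    · rw [if_neg hsD, if_neg hsD]
      have := comb_mono σ τ h s
        (fun a => ∑ s', G.P s a s' * Zq G σ τ D ρ g lam k (h ++ [(s, a)]) s')
        (fun a => ∑ s', G.P s a s' * Zq G σ τ D ρ g lam (k+1) (h ++ [(s, a)]) s')
        (fun a _ => row_mono s a _ _ fun s' => ih _ s')
      nlinarith

theorem Zq_mono (hρ0 : ∀ t, 0 ≤ ρ t) (hg0 : 0 ≤ g) (hlam0 : 0 ≤ lam) (hlam1 : lam ≤ 1)
    {k k' : ℕ} (hk : k ≤ k') (h : List (S × L)) (s : S) :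
    Zq G σ τ D ρ g lam k h s ≤ Zq G σ τ D ρ g lam k' h s := by
  induction k' with
  | zero => rw [Nat.le_zero.mp hk]
  | succ k' ih =>
    rcases Nat.lt_or_ge k (k'+1) with h' | h'
    · exact (ih (Nat.lt_succ_iff.mp h')).trans
        (Zq_succ_le σ τ D ρ g lam hρ0 hg0 hlam0 hlam1 k' h s)
    · rw [le_antisymm hk h']

/-- The total discounted value: supremum of the `k`-step values. -/
noncomputable def ZSup (G : SG S L) (σ τ : Strategy G) (D : Finset S) (ρ : S → ℝ)
    (g lam : ℝ) (h : List (S × L)) (s : S) : ℝ :=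
  ⨆ k, Zq G σ τ D ρ g lam k h s

theorem Zq_bdd (hρ1 : ∀ t, ρ t ≤ 1) (hg1 : g ≤ 1) (hlam0 : 0 ≤ lam) (hlam1 : lam ≤ 1)
    (h : List (S × L)) (s : S) :
    BddAbove (Set.range (fun k => Zq G σ τ D ρ g lam k h s)) := by
  refine ⟨1, ?_⟩
  rintro x ⟨k, rfl⟩
  exact Zq_le_one σ τ D ρ g lam hρ1 hg1 hlam0 hlam1 k h s

theorem Zq_le_ZSup (hρ1 : ∀ t, ρ t ≤ 1) (hg1 : g ≤ 1) (hlam0 : 0 ≤ lam) (hlam1 : lam ≤ 1)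
    (k : ℕ) (h : List (S × L)) (s : S) :
    Zq G σ τ D ρ g lam k h s ≤ ZSup G σ τ D ρ g lam h s :=
  le_ciSup (Zq_bdd σ τ D ρ g lam hρ1 hg1 hlam0 hlam1 h s) k

theorem ZSup_le (c : ℝ) (hc : ∀ k, Zq G σ τ D ρ g lam k h s ≤ c) :
    ZSup G σ τ D ρ g lam h s ≤ c :=
  ciSup_le hc

theorem tendsto_Zq (hρ0 : ∀ t, 0 ≤ ρ t) (hρ1 : ∀ t, ρ t ≤ 1) (hg0 : 0 ≤ g) (hg1 : g ≤ 1)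
    (hlam0 : 0 ≤ lam) (hlam1 : lam ≤ 1) (h : List (S × L)) (s : S) :
    Tendsto (fun k => Zq G σ τ D ρ g lam k h s) atTop (𝓝 (ZSup G σ τ D ρ g lam h s)) :=
  tendsto_atTop_ciSup (fun k k' hk => Zq_mono σ τ D ρ g lam hρ0 hg0 hlam0 hlam1 hk h s)
    (Zq_bdd σ τ D ρ g lam hρ1 hg1 hlam0 hlam1 h s)

theorem Zq_zero : ∀ k h s, Zq G σ τ D (fun _ => 0) 0 lam k h s = 0 := by
  intro k
  induction k with
  | zero => intro h s; simp [Zq]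
  | succ k ih =>
    intro h s
    simp only [Zq]
    split
    · rfl
    · simp [ih]

theorem Zq_add (ρ1 ρ2 : S → ℝ) (g1 g2 : ℝ) : ∀ k h s,
    Zq G σ τ D (fun t => ρ1 t + ρ2 t) (g1 + g2) lam k h s
      = Zq G σ τ D ρ1 g1 lam k h s + Zq G σ τ D ρ2 g2 lam k h s := by
  intro k
  induction k with
  | zero => intro h s; simp [Zq]
  | succ k ih =>
    intro h s
    simp only [Zq]
    split
    · rfl
    · have hsum : ∑ a ∈ G.Act s, stepProb G σ τ h s a *
          ∑ s', G.P s a s' * Zq G σ τ D (fun t => ρ1 t + ρ2 t) (g1 + g2) lam k (h ++ [(s, a)]) s'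
          = (∑ a ∈ G.Act s, stepProb G σ τ h s a *
              ∑ s', G.P s a s' * Zq G σ τ D ρ1 g1 lam k (h ++ [(s, a)]) s')
            + ∑ a ∈ G.Act s, stepProb G σ τ h s a *
              ∑ s', G.P s a s' * Zq G σ τ D ρ2 g2 lam k (h ++ [(s, a)]) s' := by
        rw [← Finset.sum_add_distrib]
        refine Finset.sum_congr rfl fun a _ => ?_
        rw [← mul_add, ← Finset.sum_add_distrib]
        congr 1
        refine Finset.sum_congr rfl fun s' _ => ?_
        rw [ih, mul_add]
      rw [hsum]
      ring

theorem Zq_smul (c : ℝ) : ∀ k h s,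
    Zq G σ τ D (fun t => c * ρ t) (c * g) lam k h s = c * Zq G σ τ D ρ g lam k h s := by
  intro k
  induction k with
  | zero => intro h s; simp [Zq]
  | succ k ih =>
    intro h s
    simp only [Zq]
    by_cases hsD : s ∈ D
    · rw [if_pos hsD, if_pos hsD]
    · rw [if_neg hsD, if_neg hsD]
      have hsum : ∑ a ∈ G.Act s, stepProb G σ τ h s a *
          ∑ s', G.P s a s' * Zq G σ τ D (fun t => c * ρ t) (c * g) lam k (h ++ [(s, a)]) s'
          = c * ∑ a ∈ G.Act s, stepProb G σ τ h s a *
              ∑ s', G.P s a s' * Zq G σ τ D ρ g lam k (h ++ [(s, a)]) s' := by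
        rw [Finset.mul_sum]
        refine Finset.sum_congr rfl fun a _ => ?_
        have hin : (∑ s', G.P s a s' *
            Zq G σ τ D (fun t => c * ρ t) (c * g) lam k (h ++ [(s, a)]) s')
            = c * ∑ s', G.P s a s' * Zq G σ τ D ρ g lam k (h ++ [(s, a)]) s' := by
          rw [Finset.mul_sum]
          exact Finset.sum_congr rfl fun s' _ => by rw [ih]; ring
        rw [hin]; ring
      rw [hsum]; ring

theorem Zq_sum {ι : Type*} [DecidableEq ι] (u : Finset ι) (ρi : ι → S → ℝ) (gi : ι → ℝ) :
    ∀ k h s, Zq G σ τ D (fun t => ∑ i ∈ u, ρi i t) (∑ i ∈ u, gi i) lam k h s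
      = ∑ i ∈ u, Zq G σ τ D (ρi i) (gi i) lam k h s := by
  classical
  induction u using Finset.induction_on with
  | empty => intro k h s; simpa using Zq_zero σ τ D lam k h s
  | insert _ _ hnotmem _ =>
    rename_i i u ih
    intro k h s
    have h1 : (fun t => ∑ j ∈ insert i u, ρi j t) = fun t => ρi i t + ∑ j ∈ u, ρi j t :=
      funext fun t => Finset.sum_insert hnotmem
    have h2 : (∑ j ∈ insert i u, gi j) = gi i + ∑ j ∈ u, gi j := Finset.sum_insert hnotmem
    have h3 : (∑ j ∈ insert i u, Zq G σ τ D (ρi j) (gi j) lam k h s)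
        = Zq G σ τ D (ρi i) (gi i) lam k h s + ∑ j ∈ u, Zq G σ τ D (ρi j) (gi j) lam k h s :=
      Finset.sum_insert hnotmem
    rw [h1, h2, h3,
      Zq_add σ τ D lam (ρi i) (fun t => ∑ j ∈ u, ρi j t) (gi i) (∑ j ∈ u, gi j) k h s,
      ih k h s]

end ZqAux

/-! ### Atomic bounds for `Zq` -/

section AtomicAux

open Filter Topology

/-- Indicator function of a finset. -/
noncomputable def chiF (B : Finset S) : S → ℝ := fun t => if t ∈ B then 1 else 0

theorem chiF_nonneg (B : Finset S) (t : S) : 0 ≤ chiF B t := by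
  unfold chiF; split <;> norm_num

theorem chiF_le_one (B : Finset S) (t : S) : chiF B t ≤ 1 := by
  unfold chiF; split <;> norm_num

variable {G : SG S L} (σ τ : Strategy G) (D : Finset S) (lam : ℝ)

theorem comb_row_pull (h : List (S × L)) (s : S) (c : ℝ) (X : L → S → ℝ) :
    ∑ a ∈ G.Act s, stepProb G σ τ h s a * ∑ s', G.P s a s' * (c * X a s')
      = c * ∑ a ∈ G.Act s, stepProb G σ τ h s a * ∑ s', G.P s a s' * X a s' := by
  rw [Finset.mul_sum]
  refine Finset.sum_congr rfl fun a _ => ?_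
  have : (∑ s', G.P s a s' * (c * X a s')) = c * ∑ s', G.P s a s' * X a s' := by
    rw [Finset.mul_sum]
    exact Finset.sum_congr rfl fun s' _ => by ring
  rw [this]; ring

theorem comb_row_sum_swap (h : List (S × L)) (s : S) (u : Finset ℕ) (Y : ℕ → L → S → ℝ) :
    ∑ a ∈ G.Act s, stepProb G σ τ h s a * ∑ s', G.P s a s' * (∑ j ∈ u, Y j a s')
      = ∑ j ∈ u, ∑ a ∈ G.Act s, stepProb G σ τ h s a * ∑ s', G.P s a s' * Y j a s' := by
  have step1 : ∀ a ∈ G.Act s, stepProb G σ τ h s a * ∑ s', G.P s a s' * (∑ j ∈ u, Y j a s')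
      = ∑ j ∈ u, stepProb G σ τ h s a * ∑ s', G.P s a s' * Y j a s' := by
    intro a _
    have hin : (∑ s', G.P s a s' * ∑ j ∈ u, Y j a s')
        = ∑ j ∈ u, ∑ s', G.P s a s' * Y j a s' := by
      have : ∀ s' ∈ Finset.univ, G.P s a s' * ∑ j ∈ u, Y j a s'
          = ∑ j ∈ u, G.P s a s' * Y j a s' := fun s' _ => Finset.mul_sum _ _ _
      rw [Finset.sum_congr rfl this, Finset.sum_comm]
    rw [hin, Finset.mul_sum]
  rw [Finset.sum_congr rfl step1, Finset.sum_comm]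

theorem comb_one_sub_reach (h : List (S × L)) {s : S} (hsD : s ∉ D) (j : ℕ) :
    ∑ a ∈ G.Act s, stepProb G σ τ h s a *
        ∑ s', G.P s a s' * (1 - reachAux G σ τ D j (h ++ [(s, a)]) s')
      = 1 - reachAux G σ τ D (j + 1) h s := by
  have inner : ∀ a ∈ G.Act s, (∑ s', G.P s a s' * (1 - reachAux G σ τ D j (h ++ [(s, a)]) s'))
      = 1 - ∑ s', G.P s a s' * reachAux G σ τ D j (h ++ [(s, a)]) s' := by
    intro a ha
    have : ∀ s' ∈ Finset.univ, G.P s a s' * (1 - reachAux G σ τ D j (h ++ [(s, a)]) s')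
        = G.P s a s' - G.P s a s' * reachAux G σ τ D j (h ++ [(s, a)]) s' := fun s' _ => by ring
    rw [Finset.sum_congr rfl this, Finset.sum_sub_distrib, G.P_sum s a ha]
  have houter : ∑ a ∈ G.Act s, stepProb G σ τ h s a *
      ∑ s', G.P s a s' * (1 - reachAux G σ τ D j (h ++ [(s, a)]) s')
      = ∑ a ∈ G.Act s, (stepProb G σ τ h s a - stepProb G σ τ h s a *
        ∑ s', G.P s a s' * reachAux G σ τ D j (h ++ [(s, a)]) s') := by
    refine Finset.sum_congr rfl fun a ha => ?_
    rw [inner a ha]; ring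
  rw [houter, Finset.sum_sub_distrib, stepProb_sum]
  have hrec : reachAux G σ τ D (j+1) h s = ∑ a ∈ G.Act s, stepProb G σ τ h s a *
      ∑ s', G.P s a s' * reachAux G σ τ D j (h ++ [(s, a)]) s' := by
    simp only [reachAux, if_neg hsD]
  rw [hrec]

theorem Zq_chi_le_reach {B : Finset S} (hBD : B ⊆ D)
    (hlam0 : 0 ≤ lam) (hlam1 : lam ≤ 1) :
    ∀ k h s, Zq G σ τ D (chiF B) 0 lam k h s ≤ reachAux G σ τ B k h s := by
  intro k
  induction k with
  | zero => intro h s; exact le_of_eq_of_le (by simp [Zq]) (reachAux_nonneg σ τ B 0 h s)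
  | succ k ih =>
    intro h s
    by_cases hsB : s ∈ B
    · rw [Zq_succ_eq, if_pos (hBD hsB), reachAux_mem σ τ B hsB]
      exact chiF_le_one B s
    · by_cases hsD : s ∈ D
      · rw [Zq_succ_eq, if_pos hsD]
        refine le_trans (le_of_eq ?_) (reachAux_nonneg σ τ B (k+1) h s)
        simp [chiF, hsB]
      · rw [Zq_succ_eq, if_neg hsD]
        have h0 : ∀ a ∈ G.Act s, (0:ℝ) ≤ stepProb G σ τ h s a *
            ∑ s', G.P s a s' * Zq G σ τ D (chiF B) 0 lam k (h ++ [(s, a)]) s' := by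
          intro a _
          exact mul_nonneg (stepProb_nonneg σ τ h s a) (row_nonneg s a _ fun s' =>
            Zq_nonneg σ τ D (chiF B) 0 lam (chiF_nonneg B) le_rfl hlam0 hlam1 k _ s')
        have hsum0 : (0:ℝ) ≤ ∑ a ∈ G.Act s, stepProb G σ τ h s a *
            ∑ s', G.P s a s' * Zq G σ τ D (chiF B) 0 lam k (h ++ [(s, a)]) s' :=
          Finset.sum_nonneg h0
        have hcmp : ∑ a ∈ G.Act s, stepProb G σ τ h s a *
            ∑ s', G.P s a s' * Zq G σ τ D (chiF B) 0 lam k (h ++ [(s, a)]) s'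
            ≤ ∑ a ∈ G.Act s, stepProb G σ τ h s a *
              ∑ s', G.P s a s' * reachAux G σ τ B k (h ++ [(s, a)]) s' :=
          comb_mono σ τ h s _ _ fun a _ => row_mono s a _ _ fun s' => ih _ s'
        have hR : reachAux G σ τ B (k+1) h s = ∑ a ∈ G.Act s, stepProb G σ τ h s a *
            ∑ s', G.P s a s' * reachAux G σ τ B k (h ++ [(s, a)]) s' := by
          simp only [reachAux, if_neg hsB]
        rw [hR]
        nlinarith

theorem Zq_chi_ge_reach {B : Finset S} (hD : ∀ t ∈ D, G.Absorbing t) (hBD : B ⊆ D)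
    (hlam0 : 0 ≤ lam) (hlam1 : lam ≤ 1) :
    ∀ k h s, lam ^ (k+1) * reachAux G σ τ B k h s ≤ Zq G σ τ D (chiF B) 0 lam (k+1) h s := by
  intro k
  induction k with
  | zero =>
    intro h s
    by_cases hsB : s ∈ B
    · rw [reachAux_mem σ τ B hsB, Zq_succ_eq, if_pos (hBD hsB)]
      simp only [chiF, if_pos hsB]
      simpa using hlam1
    · have : reachAux G σ τ B 0 h s = 0 := by simp [reachAux, hsB]
      rw [this, mul_zero]
      exact Zq_nonneg σ τ D (chiF B) 0 lam (chiF_nonneg B) le_rfl hlam0 hlam1 1 h s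
  | succ k ih =>
    intro h s
    by_cases hsB : s ∈ B
    · rw [reachAux_mem σ τ B hsB, Zq_succ_eq, if_pos (hBD hsB), mul_one]
      simp only [chiF, if_pos hsB]
      exact pow_le_one₀ hlam0 hlam1
    · by_cases hsD : s ∈ D
      · rw [reachAux_sink σ τ B (hD s hsD) hsB (k+1) h, mul_zero, Zq_succ_eq, if_pos hsD]
        simp [chiF, hsB]
      · rw [Zq_succ_eq, if_neg hsD]
        have hstep : ∀ a ∈ G.Act s, ∑ s', G.P s a s' *
              (lam ^ (k+1) * reachAux G σ τ B k (h ++ [(s, a)]) s')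
            ≤ ∑ s', G.P s a s' * Zq G σ τ D (chiF B) 0 lam (k+1) (h ++ [(s, a)]) s' :=
          fun a _ => row_mono s a _ _ fun s' => ih _ s'
        have hcmp := comb_mono σ τ h s _ _ hstep
        have hpull := comb_row_pull σ τ h s (lam ^ (k+1))
          (fun a s' => reachAux G σ τ B k (h ++ [(s, a)]) s')
        rw [hpull] at hcmp
        have hR : reachAux G σ τ B (k+2) h s = ∑ a ∈ G.Act s, stepProb G σ τ h s a *
            ∑ s', G.P s a s' * reachAux G σ τ B (k+1) (h ++ [(s, a)]) s' := by
          simp only [reachAux, if_neg hsB]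
        have hRmono : reachAux G σ τ B (k+1) h s ≤ ∑ a ∈ G.Act s, stepProb G σ τ h s a *
            ∑ s', G.P s a s' * reachAux G σ τ B k (h ++ [(s, a)]) s' := by
          have : reachAux G σ τ B (k+1) h s = ∑ a ∈ G.Act s, stepProb G σ τ h s a *
              ∑ s', G.P s a s' * reachAux G σ τ B k (h ++ [(s, a)]) s' := by
            simp only [reachAux, if_neg hsB]
          rw [this]
        calc lam ^ (k+2) * reachAux G σ τ B (k+1) h s
            = lam * (lam ^ (k+1) * reachAux G σ τ B (k+1) h s) := by ring
          _ ≤ lam * (lam ^ (k+1) * ∑ a ∈ G.Act s, stepProb G σ τ h s a *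
              ∑ s', G.P s a s' * reachAux G σ τ B k (h ++ [(s, a)]) s') := by
              have hp : (0:ℝ) ≤ lam ^ (k+1) := pow_nonneg hlam0 _
              have := mul_le_mul_of_nonneg_left hRmono hp
              exact mul_le_mul_of_nonneg_left this hlam0
          _ ≤ lam * ∑ a ∈ G.Act s, stepProb G σ τ h s a *
              ∑ s', G.P s a s' * Zq G σ τ D (chiF B) 0 lam (k+1) (h ++ [(s, a)]) s' :=
              mul_le_mul_of_nonneg_left hcmp hlam0
          _ ≤ (1 - lam) * 0 + lam * ∑ a ∈ G.Act s, stepProb G σ τ h s a *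
              ∑ s', G.P s a s' * Zq G σ τ D (chiF B) 0 lam (k+1) (h ++ [(s, a)]) s' := by
              nlinarith
  
theorem Zq_A_formula (hlam1 : lam ≤ 1) :
    ∀ k h s, Zq G σ τ D (fun _ => 0) 1 lam k h s
      = (1 - lam) * ∑ j ∈ Finset.range k, lam ^ j * (1 - reachAux G σ τ D j h s) := by
  intro k
  induction k with
  | zero => intro h s; simp [Zq]
  | succ k ih =>
    intro h s
    by_cases hsD : s ∈ D
    · rw [Zq_succ_eq, if_pos hsD]
      have : ∀ j ∈ Finset.range (k+1), lam ^ j * (1 - reachAux G σ τ D j h s) = 0 := by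
        intro j _
        rw [reachAux_mem σ τ D hsD]
        ring
      rw [Finset.sum_congr rfl this]
      simp
    · rw [Zq_succ_eq, if_neg hsD]
      have hih : ∀ a ∈ G.Act s, stepProb G σ τ h s a * ∑ s', G.P s a s' *
            Zq G σ τ D (fun _ => 0) 1 lam k (h ++ [(s, a)]) s'
          = stepProb G σ τ h s a * ∑ s', G.P s a s' *
            (∑ j ∈ Finset.range k, (1 - lam) * lam ^ j *
              (1 - reachAux G σ τ D j (h ++ [(s, a)]) s')) := by
        intro a _
        congr 1
        refine Finset.sum_congr rfl fun s' _ => ?_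
        rw [ih]
        congr 1
        rw [Finset.mul_sum]
        exact Finset.sum_congr rfl fun j _ => by ring
      rw [Finset.sum_congr rfl hih]
      rw [comb_row_sum_swap σ τ h s (Finset.range k)
        (fun j a s' => (1 - lam) * lam ^ j * (1 - reachAux G σ τ D j (h ++ [(s, a)]) s'))]
      have hj : ∀ j ∈ Finset.range k, (∑ a ∈ G.Act s, stepProb G σ τ h s a *
            ∑ s', G.P s a s' * ((1 - lam) * lam ^ j *
              (1 - reachAux G σ τ D j (h ++ [(s, a)]) s')))
          = (1 - lam) * lam ^ j * (1 - reachAux G σ τ D (j+1) h s) := by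
        intro j _
        rw [comb_row_pull σ τ h s ((1 - lam) * lam ^ j)
          (fun a s' => 1 - reachAux G σ τ D j (h ++ [(s, a)]) s'),
          comb_one_sub_reach σ τ D h hsD j]
      rw [Finset.sum_congr rfl hj]
      rw [Finset.sum_range_succ' (fun j => lam ^ j * (1 - reachAux G σ τ D j h s)) k]
      have h0 : reachAux G σ τ D 0 h s = 0 := by simp [reachAux, hsD]
      rw [h0]
      have hL : lam * ∑ j ∈ Finset.range k,
            (1 - lam) * lam ^ j * (1 - reachAux G σ τ D (j+1) h s)
          = ∑ j ∈ Finset.range k,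
            (1 - lam) * (lam ^ (j+1) * (1 - reachAux G σ τ D (j+1) h s)) := by
        rw [Finset.mul_sum]
        exact Finset.sum_congr rfl fun j _ => by ring
      have hR : (1 - lam) * (∑ j ∈ Finset.range k,
            lam ^ (j+1) * (1 - reachAux G σ τ D (j+1) h s) + lam ^ 0 * (1 - (0:ℝ)))
          = (∑ j ∈ Finset.range k,
            (1 - lam) * (lam ^ (j+1) * (1 - reachAux G σ τ D (j+1) h s))) + (1 - lam) := by
        rw [mul_add, Finset.mul_sum]
        simp
      rw [hL, hR]
      ring

end AtomicAux

/-! ### Discounted Bellman operator, fixpoint, and optimal MD strategies -/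

section BellmanAux

open Filter Topology

variable {G : SG S L}

/-- Expected value of `w` after playing action `a` at `s`. -/
noncomputable def rowVal (G : SG S L) (w : S → ℝ) (s : S) (a : L) : ℝ :=
  ∑ s', G.P s a s' * w s'

noncomputable def optA (G : SG S L) (w : S → ℝ) (s : S) : ℝ :=
  if G.isMax s then (G.Act s).sup' (G.act_nonempty s) (rowVal G w s)
  else (G.Act s).inf' (G.act_nonempty s) (rowVal G w s)

noncomputable def Bell (G : SG S L) (D : Finset S) (ρ : S → ℝ) (g lam : ℝ)
    (w : S → ℝ) : S → ℝ :=
  fun s => if s ∈ D then ρ s else (1 - lam) * g + lam * optA G w s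

theorem rowVal_le_add (w w' : S → ℝ) {s : S} {a : L} (ha : a ∈ G.Act s) :
    rowVal G w s a ≤ rowVal G w' s a + dist w w' := by
  have h1 : ∀ s', w s' ≤ w' s' + dist w w' := by
    intro s'
    have h2 := dist_le_pi_dist w w' s'
    rw [Real.dist_eq] at h2
    have h3 : w s' - w' s' ≤ |w s' - w' s'| := le_abs_self _
    linarith
  calc rowVal G w s a ≤ ∑ s', G.P s a s' * (w' s' + dist w w') := row_mono s a _ _ h1
    _ = rowVal G w' s a + dist w w' := by
        unfold rowVal
        have h4 : ∀ s' ∈ Finset.univ, G.P s a s' * (w' s' + dist w w')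
            = G.P s a s' * w' s' + G.P s a s' * dist w w' := fun s' _ => by ring
        rw [Finset.sum_congr rfl h4, Finset.sum_add_distrib, ← Finset.sum_mul,
          G.P_sum s a ha, one_mul]

theorem optA_le_add (w w' : S → ℝ) (s : S) :
    optA G w s ≤ optA G w' s + dist w w' := by
  unfold optA
  split
  · refine Finset.sup'_le _ _ fun a ha => ?_
    exact (rowVal_le_add w w' ha).trans
      (add_le_add (Finset.le_sup' (rowVal G w' s) ha) le_rfl)
  · obtain ⟨a, ha, heq⟩ := Finset.exists_mem_eq_inf' (G.act_nonempty s) (rowVal G w' s)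
    rw [heq]
    exact (Finset.inf'_le _ ha).trans (rowVal_le_add w w' ha)

theorem optA_bounds (w : S → ℝ) (h0 : ∀ s', 0 ≤ w s') (h1 : ∀ s', w s' ≤ 1) (s : S) :
    0 ≤ optA G w s ∧ optA G w s ≤ 1 := by
  have hr0 : ∀ a ∈ G.Act s, 0 ≤ rowVal G w s a := fun a ha => le_row ha w 0 h0
  have hr1 : ∀ a ∈ G.Act s, rowVal G w s a ≤ 1 := fun a ha => row_le ha w 1 h1
  obtain ⟨a0, ha0⟩ := G.act_nonempty s
  unfold optA
  split
  · constructor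
    · exact le_trans (hr0 a0 ha0) (Finset.le_sup' _ ha0)
    · exact Finset.sup'_le _ _ hr1
  · constructor
    · exact le_trans (by norm_num) (Finset.le_inf' _ _ hr0)
    · exact (Finset.inf'_le _ ha0).trans (hr1 a0 ha0)

theorem Bell_mem01 (D : Finset S) (ρ : S → ℝ) (g lam : ℝ)
    (hρ0 : ∀ t, 0 ≤ ρ t) (hρ1 : ∀ t, ρ t ≤ 1) (hg0 : 0 ≤ g) (hg1 : g ≤ 1)
    (hlam0 : 0 ≤ lam) (hlam1 : lam ≤ 1) (w : S → ℝ)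
    (h0 : ∀ s', 0 ≤ w s') (h1 : ∀ s', w s' ≤ 1) (s : S) :
    0 ≤ Bell G D ρ g lam w s ∧ Bell G D ρ g lam w s ≤ 1 := by
  unfold Bell
  split
  · exact ⟨hρ0 s, hρ1 s⟩
  · obtain ⟨ho0, ho1⟩ := optA_bounds (G := G) w h0 h1 s
    constructor <;> nlinarith

theorem exists_bell_fix (D : Finset S) (ρ : S → ℝ) (g lam : ℝ)
    (hρ0 : ∀ t, 0 ≤ ρ t) (hρ1 : ∀ t, ρ t ≤ 1) (hg0 : 0 ≤ g) (hg1 : g ≤ 1)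
    (hlam0 : 0 < lam) (hlam1 : lam < 1) :
    ∃ w : S → ℝ, (∀ s, 0 ≤ w s ∧ w s ≤ 1) ∧ ∀ s, Bell G D ρ g lam w s = w s := by
  have hlip : LipschitzWith lam.toNNReal (Bell G D ρ g lam) := by
    refine LipschitzWith.of_dist_le_mul fun w w' => ?_
    rw [Real.coe_toNNReal lam hlam0.le]
    refine dist_pi_le_iff (mul_nonneg hlam0.le dist_nonneg) |>.2 fun s => ?_
    unfold Bell
    split
    · rw [dist_self]
      exact mul_nonneg hlam0.le dist_nonneg
    · rw [Real.dist_eq]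
      have hle1 := optA_le_add (G := G) w w' s
      have hle2 := optA_le_add (G := G) w' w s
      rw [dist_comm w' w] at hle2
      rw [abs_le]
      constructor <;> nlinarith [dist_nonneg (x := w) (y := w')]
  have hcontr : ContractingWith lam.toNNReal (Bell G D ρ g lam) := by
    constructor
    · have hco : (lam.toNNReal : ℝ) < ((1 : NNReal) : ℝ) := by
        rw [Real.coe_toNNReal lam hlam0.le]
        norm_num [hlam1]
      exact_mod_cast hco
    · exact hlip
  set w := ContractingWith.fixedPoint (Bell G D ρ g lam) hcontr with hwdef
  have hfix : Bell G D ρ g lam w = w := ContractingWith.fixedPoint_isFixedPt hcontr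
  have htend := ContractingWith.tendsto_iterate_fixedPoint hcontr (fun _ => (0:ℝ))
  have hiter : ∀ m s, 0 ≤ ((Bell G D ρ g lam)^[m] (fun _ => 0)) s
      ∧ ((Bell G D ρ g lam)^[m] (fun _ => 0)) s ≤ 1 := by
    intro m
    induction m with
    | zero => intro s; simp
    | succ m ih =>
      intro s
      rw [Function.iterate_succ_apply']
      exact Bell_mem01 D ρ g lam hρ0 hρ1 hg0 hg1 hlam0.le hlam1.le _
        (fun s' => (ih s').1) (fun s' => (ih s').2) s
  refine ⟨w, fun s => ?_, fun s => congrFun hfix s⟩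
  have hts : Tendsto (fun m => ((Bell G D ρ g lam)^[m] (fun _ => 0)) s) atTop (𝓝 (w s)) :=
    ((continuous_apply s).continuousAt.tendsto.comp htend)
  constructor
  · exact ge_of_tendsto' hts fun m => (hiter m s).1
  · exact le_of_tendsto' hts fun m => (hiter m s).2

theorem exists_argmax (w : S → ℝ) :
    ∃ c : S → L, (∀ s, c s ∈ G.Act s) ∧
      ∀ s, (G.Act s).sup' (G.act_nonempty s) (rowVal G w s) = rowVal G w s (c s) := by
  have h : ∀ s, ∃ a, a ∈ G.Act s ∧
      (G.Act s).sup' (G.act_nonempty s) (rowVal G w s) = rowVal G w s a := by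
    intro s
    obtain ⟨a, ha, heq⟩ := Finset.exists_mem_eq_sup' (G.act_nonempty s) (rowVal G w s)
    exact ⟨a, ha, heq⟩
  choose c h1 h2 using h
  exact ⟨c, h1, h2⟩

theorem exists_argmin (w : S → ℝ) :
    ∃ c : S → L, (∀ s, c s ∈ G.Act s) ∧
      ∀ s, (G.Act s).inf' (G.act_nonempty s) (rowVal G w s) = rowVal G w s (c s) := by
  have h : ∀ s, ∃ a, a ∈ G.Act s ∧
      (G.Act s).inf' (G.act_nonempty s) (rowVal G w s) = rowVal G w s a := by
    intro s
    obtain ⟨a, ha, heq⟩ := Finset.exists_mem_eq_inf' (G.act_nonempty s) (rowVal G w s)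
    exact ⟨a, ha, heq⟩
  choose c h1 h2 using h
  exact ⟨c, h1, h2⟩

theorem row_sub_const {s : S} {a : L} (ha : a ∈ G.Act s) (w : S → ℝ) (c : ℝ) :
    ∑ s', G.P s a s' * (w s' - c) = rowVal G w s a - c := by
  unfold rowVal
  have : ∀ s' ∈ Finset.univ, G.P s a s' * (w s' - c)
      = G.P s a s' * w s' - G.P s a s' * c := fun s' _ => by ring
  rw [Finset.sum_congr rfl this, Finset.sum_sub_distrib, ← Finset.sum_mul, G.P_sum s a ha,
    one_mul]

theorem row_add_const {s : S} {a : L} (ha : a ∈ G.Act s) (w : S → ℝ) (c : ℝ) :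
    ∑ s', G.P s a s' * (w s' + c) = rowVal G w s a + c := by
  unfold rowVal
  have : ∀ s' ∈ Finset.univ, G.P s a s' * (w s' + c)
      = G.P s a s' * w s' + G.P s a s' * c := fun s' _ => by ring
  rw [Finset.sum_congr rfl this, Finset.sum_add_distrib, ← Finset.sum_mul, G.P_sum s a ha,
    one_mul]

variable (D : Finset S) (ρ : S → ℝ) (g lam : ℝ)

/-- Against the argmax MD strategy, every `τ` yields at least the fixpoint value. -/
theorem Zq_ge_fix (hlam0 : 0 < lam) (hlam1 : lam < 1)
    (w : S → ℝ) (hw01 : ∀ s, 0 ≤ w s ∧ w s ≤ 1) (hw : ∀ s, Bell G D ρ g lam w s = w s)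
    (c : S → L) (hc : ∀ s, c s ∈ G.Act s)
    (hcmax : ∀ s, (G.Act s).sup' (G.act_nonempty s) (rowVal G w s) = rowVal G w s (c s))
    (τ : Strategy G) :
    ∀ k h s, w s - lam ^ k ≤ Zq G (mkMD G c hc) τ D ρ g lam k h s := by
  intro k
  induction k with
  | zero =>
    intro h s
    simp only [Zq, pow_zero]
    linarith [(hw01 s).2]
  | succ k ih =>
    intro h s
    rw [Zq_succ_eq]
    by_cases hsD : s ∈ D
    · rw [if_pos hsD]
      have : w s = ρ s := by rw [← hw s]; unfold Bell; rw [if_pos hsD]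
      have hp : (0:ℝ) ≤ lam ^ (k+1) := pow_nonneg hlam0.le _
      linarith
    · rw [if_neg hsD]
      have hinner : ∀ a ∈ G.Act s, rowVal G w s a - lam ^ k
          ≤ ∑ s', G.P s a s' * Zq G (mkMD G c hc) τ D ρ g lam k (h ++ [(s, a)]) s' := by
        intro a ha
        rw [← row_sub_const ha w (lam ^ k)]
        exact row_mono s a _ _ fun s' => ih _ s'
      have hkey : optA G w s - lam ^ k ≤ ∑ a ∈ G.Act s,
          stepProb G (mkMD G c hc) τ h s a *
            ∑ s', G.P s a s' * Zq G (mkMD G c hc) τ D ρ g lam k (h ++ [(s, a)]) s' := by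
        by_cases hmax : G.isMax s
        · rw [comb_mkMD_max c hc τ h hmax]
          unfold optA
          rw [if_pos hmax, hcmax s]
          exact hinner (c s) (hc s)
        · refine le_comb _ _ h s _ _ fun a ha => ?_
          refine le_trans ?_ (hinner a ha)
          unfold optA
          rw [if_neg hmax]
          have := Finset.inf'_le (rowVal G w s) ha
          linarith
      have hws : w s = (1 - lam) * g + lam * optA G w s := by
        rw [← hw s]; unfold Bell; rw [if_neg hsD]
      have := mul_le_mul_of_nonneg_left hkey hlam0.le
      rw [hws]
      have hpow : lam * (optA G w s - lam ^ k) = lam * optA G w s - lam ^ (k+1) := by ring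
      linarith [hpow ▸ this]

/-- Against the argmin MD strategy, every `σ` yields at most the fixpoint value. -/
theorem Zq_le_fix (hlam0 : 0 < lam) (hlam1 : lam < 1)
    (w : S → ℝ) (hw01 : ∀ s, 0 ≤ w s ∧ w s ≤ 1) (hw : ∀ s, Bell G D ρ g lam w s = w s)
    (c : S → L) (hc : ∀ s, c s ∈ G.Act s)
    (hcmin : ∀ s, (G.Act s).inf' (G.act_nonempty s) (rowVal G w s) = rowVal G w s (c s))
    (σ : Strategy G) :
    ∀ k h s, Zq G σ (mkMD G c hc) D ρ g lam k h s ≤ w s + lam ^ k := by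
  intro k
  induction k with
  | zero =>
    intro h s
    simp only [Zq, pow_zero]
    linarith [(hw01 s).1]
  | succ k ih =>
    intro h s
    rw [Zq_succ_eq]
    by_cases hsD : s ∈ D
    · rw [if_pos hsD]
      have : w s = ρ s := by rw [← hw s]; unfold Bell; rw [if_pos hsD]
      have hp : (0:ℝ) ≤ lam ^ (k+1) := pow_nonneg hlam0.le _
      linarith
    · rw [if_neg hsD]
      have hinner : ∀ a ∈ G.Act s,
          (∑ s', G.P s a s' * Zq G σ (mkMD G c hc) D ρ g lam k (h ++ [(s, a)]) s')
            ≤ rowVal G w s a + lam ^ k := by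
        intro a ha
        rw [← row_add_const ha w (lam ^ k)]
        exact row_mono s a _ _ fun s' => ih _ s'
      have hkey : (∑ a ∈ G.Act s, stepProb G σ (mkMD G c hc) h s a *
            ∑ s', G.P s a s' * Zq G σ (mkMD G c hc) D ρ g lam k (h ++ [(s, a)]) s')
          ≤ optA G w s + lam ^ k := by
        by_cases hmax : G.isMax s
        · refine comb_le _ _ h s _ _ fun a ha => ?_
          refine le_trans (hinner a ha) ?_
          unfold optA
          rw [if_pos hmax]
          have := Finset.le_sup' (rowVal G w s) ha
          linarith
        · rw [comb_mkMD_min c hc σ h hmax]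
          unfold optA
          rw [if_neg hmax, hcmin s]
          exact hinner (c s) (hc s)
      have hws : w s = (1 - lam) * g + lam * optA G w s := by
        rw [← hw s]; unfold Bell; rw [if_neg hsD]
      have := mul_le_mul_of_nonneg_left hkey hlam0.le
      rw [hws]
      have hpow : lam * (optA G w s + lam ^ k) = lam * optA G w s + lam ^ (k+1) := by ring
      linarith [hpow ▸ this]

theorem ZSup_ge_fix (hρ1 : ∀ t, ρ t ≤ 1) (hg1 : g ≤ 1) (hlam0 : 0 < lam) (hlam1 : lam < 1)
    (w : S → ℝ) (hw01 : ∀ s, 0 ≤ w s ∧ w s ≤ 1) (hw : ∀ s, Bell G D ρ g lam w s = w s)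
    (c : S → L) (hc : ∀ s, c s ∈ G.Act s)
    (hcmax : ∀ s, (G.Act s).sup' (G.act_nonempty s) (rowVal G w s) = rowVal G w s (c s))
    (τ : Strategy G) (h : List (S × L)) (s : S) :
    w s ≤ ZSup G (mkMD G c hc) τ D ρ g lam h s := by
  have hten : Tendsto (fun k : ℕ => w s - lam ^ k) atTop (𝓝 (w s)) := by
    have hpow := tendsto_pow_atTop_nhds_zero_of_lt_one hlam0.le hlam1
    simpa using (tendsto_const_nhds (α := ℕ) (x := w s)).sub hpow
  refine le_of_tendsto' hten fun k => ?_
  exact (Zq_ge_fix D ρ g lam hlam0 hlam1 w hw01 hw c hc hcmax τ k h s).trans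
    (Zq_le_ZSup _ _ D ρ g lam hρ1 hg1 hlam0.le hlam1.le k h s)

theorem ZSup_le_fix (hρ0 : ∀ t, 0 ≤ ρ t) (hρ1 : ∀ t, ρ t ≤ 1) (hg0 : 0 ≤ g) (hg1 : g ≤ 1)
    (hlam0 : 0 < lam) (hlam1 : lam < 1)
    (w : S → ℝ) (hw01 : ∀ s, 0 ≤ w s ∧ w s ≤ 1) (hw : ∀ s, Bell G D ρ g lam w s = w s)
    (c : S → L) (hc : ∀ s, c s ∈ G.Act s)
    (hcmin : ∀ s, (G.Act s).inf' (G.act_nonempty s) (rowVal G w s) = rowVal G w s (c s))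
    (σ : Strategy G) (h : List (S × L)) (s : S) :
    ZSup G σ (mkMD G c hc) D ρ g lam h s ≤ w s := by
  have hten : Tendsto (fun k : ℕ => w s + lam ^ k) atTop (𝓝 (w s)) := by
    have hpow := tendsto_pow_atTop_nhds_zero_of_lt_one hlam0.le hlam1
    simpa using (tendsto_const_nhds (α := ℕ) (x := w s)).add hpow
  exact le_of_tendsto_of_tendsto'
    (tendsto_Zq σ (mkMD G c hc) D ρ g lam hρ0 hρ1 hg0 hg1 hlam0.le hlam1.le h s) hten
    (fun k => Zq_le_fix D ρ g lam hlam0 hlam1 w hw01 hw c hc hcmin σ k h s)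

end BellmanAux

/-! ### Objective decomposition -/

section ObjAux

open Filter Topology

/-- Good-sink set of a single objective relative to a global sink set `D`. -/
noncomputable def objB (D : Finset S) : Obj S → Finset S
  | .reach T => T
  | .safe T => D \ T
  | .qreach _ _ => ∅
  | .qsafe _ _ => ∅

/-- Survival reward of a single objective (1 for safety). -/
noncomputable def objGamma : Obj S → ℝ
  | .safe _ => 1
  | _ => 0

variable {n : ℕ}

/-- Union of all target sets. -/
noncomputable def DSet (Ω : Fin n → Obj S) : Finset S :=
  Finset.univ.biUnion fun i => (Ω i).targets

noncomputable def BSet (Ω : Fin n → Obj S) (i : Fin n) : Finset S :=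
  objB (DSet Ω) (Ω i)

noncomputable def gammaF (Ω : Fin n → Obj S) (i : Fin n) : ℝ :=
  objGamma (Ω i)

theorem targets_subset_DSet (Ω : Fin n → Obj S) (i : Fin n) :
    (Ω i).targets ⊆ DSet Ω := by
  unfold DSet
  exact Finset.subset_biUnion_of_mem (fun j => (Ω j).targets) (Finset.mem_univ i)

theorem BSet_subset (Ω : Fin n → Obj S) (i : Fin n) : BSet Ω i ⊆ DSet Ω := by
  have htar := targets_subset_DSet Ω i
  unfold BSet
  cases hi : Ω i with
  | reach T =>
    simp only [objB]
    rw [hi] at htar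
    simpa [Obj.targets] using htar
  | safe T => simp only [objB]; exact Finset.sdiff_subset
  | qreach S' q => simp only [objB]; exact Finset.empty_subset _
  | qsafe S' q => simp only [objB]; exact Finset.empty_subset _

theorem gammaF_nonneg (Ω : Fin n → Obj S) (i : Fin n) : 0 ≤ gammaF Ω i := by
  unfold gammaF objGamma
  rcases Ω i <;> norm_num

theorem gammaF_le_one (Ω : Fin n → Obj S) (i : Fin n) : gammaF Ω i ≤ 1 := by
  unfold gammaF objGamma
  rcases Ω i <;> norm_num

variable {G : SG S L}

theorem DSet_absorbing (Ω : Fin n → Obj S) (habs : AbsorbingObj G Ω) :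
    ∀ t ∈ DSet Ω, G.Absorbing t := by
  intro t ht
  obtain ⟨i, _, hti⟩ := Finset.mem_biUnion.mp ht
  exact habs i t hti

/-- The atomic payoff combination corresponding to objective `i`. -/
noncomputable def cPay (G : SG S L) (σ τ : Strategy G) (Ω : Fin n → Obj S) (i : Fin n)
    (s : S) : ℝ :=
  PReach G σ τ (BSet Ω i) [] s + gammaF Ω i * (1 - PReach G σ τ (DSet Ω) [] s)

theorem cPay_eq_payoff (σ τ : Strategy G) (Ω : Fin n → Obj S)
    (hplain : ∀ i, (Ω i).Plain) (habs : AbsorbingObj G Ω) (i : Fin n) (s : S) :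
    cPay G σ τ Ω i s = payoff G Ω σ τ [] s i := by
  have hDabs := DSet_absorbing Ω habs
  unfold cPay payoff BSet gammaF
  have htar := targets_subset_DSet Ω i
  have hpl := hplain i
  rcases hi : Ω i with T | T | ⟨S', q⟩ | ⟨S', q⟩
  · simp only [objB, objGamma, objProb]
    ring
  · simp only [objB, objGamma, objProb]
    have hTD : T ⊆ DSet Ω := by
      rw [hi] at htar
      simpa [Obj.targets] using htar
    have hsplit := PReach_split σ τ (D := DSet Ω) (B := T) hDabs hTD [] s
    rw [hsplit]
    ring
  · rw [hi] at hpl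
    simp only [Obj.Plain] at hpl
  · rw [hi] at hpl
    simp only [Obj.Plain] at hpl

theorem payoff_mem01 (σ τ : Strategy G) (Ω : Fin n → Obj S)
    (hplain : ∀ i, (Ω i).Plain) (i : Fin n) (s : S) :
    0 ≤ payoff G Ω σ τ [] s i ∧ payoff G Ω σ τ [] s i ≤ 1 := by
  unfold payoff
  have hpl := hplain i
  rcases hi : Ω i with T | T | ⟨S', q⟩ | ⟨S', q⟩
  · simp only [objProb]
    exact ⟨PReach_nonneg σ τ T [] s, PReach_le_one σ τ T [] s⟩
  · simp only [objProb]
    constructor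
    · linarith [PReach_le_one σ τ T ([] : List (S × L)) s]
    · linarith [PReach_nonneg σ τ T ([] : List (S × L)) s]
  · rw [hi] at hpl
    simp only [Obj.Plain] at hpl
  · rw [hi] at hpl
    simp only [Obj.Plain] at hpl

theorem sum_eps_pow_le_one (ε : ℝ) (h0 : 0 ≤ ε) (h2 : ε ≤ 1/2) :
    ∑ i : Fin n, ε ^ ((i : ℕ) + 1) ≤ 1 := by
  have key : ∀ m : ℕ, ∑ j ∈ Finset.range m, (1/2 : ℝ) ^ (j + 1) = 1 - (1/2) ^ m := by
    intro m
    induction m with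
    | zero => simp
    | succ m ih => rw [Finset.sum_range_succ, ih]; ring
  calc ∑ i : Fin n, ε ^ ((i : ℕ) + 1) ≤ ∑ i : Fin n, (1/2 : ℝ) ^ ((i : ℕ) + 1) := by
        refine Finset.sum_le_sum fun i _ => ?_
        exact pow_le_pow_left₀ h0 h2 _
    _ = ∑ j ∈ Finset.range n, (1/2 : ℝ) ^ (j + 1) :=
        Fin.sum_univ_eq_sum_range (fun j => (1/2 : ℝ) ^ (j + 1)) n
    _ = 1 - (1/2) ^ n := key n
    _ ≤ 1 := by
        have : (0:ℝ) ≤ (1/2) ^ n := by positivity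
        linarith

theorem exists_freq {β : Type*} [Fintype β] (f : ℕ → β) :
    ∃ b, ∀ N, ∃ j, N ≤ j ∧ f j = b := by
  by_contra hcon
  push_neg at hcon
  choose Nf hNf using hcon
  set M := Finset.univ.sup Nf with hM
  exact hNf (f M) M (Finset.le_sup (Finset.mem_univ (f M))) rfl

theorem geom_id (lam : ℝ) (k : ℕ) :
    (1 - lam) * ∑ j ∈ Finset.range k, lam ^ j = 1 - lam ^ k := by
  induction k with
  | zero => simp
  | succ k ih => rw [Finset.sum_range_succ, mul_add, ih]; ring

end ObjAux

/-! ### Composite rewards and the λ→1 limit -/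

section CompositeAux

open Filter Topology

variable {G : SG S L} {n : ℕ}

noncomputable def rhoE (Ω : Fin n → Obj S) (ε : ℝ) : S → ℝ :=
  fun t => ∑ i : Fin n, ε ^ ((i : ℕ) + 1) * chiF (BSet Ω i) t

noncomputable def gE (Ω : Fin n → Obj S) (ε : ℝ) : ℝ :=
  ∑ i : Fin n, ε ^ ((i : ℕ) + 1) * gammaF Ω i

theorem rhoE_nonneg (Ω : Fin n → Obj S) {ε : ℝ} (hε0 : 0 ≤ ε) (t : S) : 0 ≤ rhoE Ω ε t :=
  Finset.sum_nonneg fun i _ => mul_nonneg (by positivity) (chiF_nonneg _ t)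

theorem rhoE_le_one (Ω : Fin n → Obj S) {ε : ℝ} (hε0 : 0 ≤ ε) (hε2 : ε ≤ 1/2) (t : S) :
    rhoE Ω ε t ≤ 1 := by
  refine le_trans (Finset.sum_le_sum fun i _ => ?_) (sum_eps_pow_le_one ε hε0 hε2)
  calc ε ^ ((i : ℕ) + 1) * chiF (BSet Ω i) t ≤ ε ^ ((i : ℕ) + 1) * 1 :=
        mul_le_mul_of_nonneg_left (chiF_le_one _ t) (by positivity)
    _ = ε ^ ((i : ℕ) + 1) := mul_one _

theorem gE_nonneg (Ω : Fin n → Obj S) {ε : ℝ} (hε0 : 0 ≤ ε) : 0 ≤ gE Ω ε :=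
  Finset.sum_nonneg fun i _ => mul_nonneg (by positivity) (gammaF_nonneg Ω i)

theorem gE_le_one (Ω : Fin n → Obj S) {ε : ℝ} (hε0 : 0 ≤ ε) (hε2 : ε ≤ 1/2) :
    gE Ω ε ≤ 1 := by
  refine le_trans (Finset.sum_le_sum fun i _ => ?_) (sum_eps_pow_le_one ε hε0 hε2)
  calc ε ^ ((i : ℕ) + 1) * gammaF Ω i ≤ ε ^ ((i : ℕ) + 1) * 1 :=
        mul_le_mul_of_nonneg_left (gammaF_le_one Ω i) (by positivity)
    _ = ε ^ ((i : ℕ) + 1) := mul_one _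

theorem ZSup_decomp (Ω : Fin n → Obj S) (σ τ : Strategy G) {ε lam : ℝ}
    (hε0 : 0 < ε) (hε2 : ε ≤ 1/2) (hlam0 : 0 < lam) (hlam1 : lam < 1)
    (h : List (S × L)) (s : S) :
    ZSup G σ τ (DSet Ω) (rhoE Ω ε) (gE Ω ε) lam h s
      = ∑ i : Fin n, ε ^ ((i : ℕ) + 1) *
          ZSup G σ τ (DSet Ω) (chiF (BSet Ω i)) (gammaF Ω i) lam h s := by
  have hk : ∀ k, Zq G σ τ (DSet Ω) (rhoE Ω ε) (gE Ω ε) lam k h s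
      = ∑ i : Fin n, ε ^ ((i : ℕ) + 1) *
          Zq G σ τ (DSet Ω) (chiF (BSet Ω i)) (gammaF Ω i) lam k h s := by
    intro k
    have h1 := Zq_sum σ τ (DSet Ω) lam (Finset.univ : Finset (Fin n))
      (fun i t => ε ^ ((i : ℕ) + 1) * chiF (BSet Ω i) t)
      (fun i => ε ^ ((i : ℕ) + 1) * gammaF Ω i) k h s
    have h2 : Zq G σ τ (DSet Ω) (rhoE Ω ε) (gE Ω ε) lam k h s
        = Zq G σ τ (DSet Ω)
            (fun t => ∑ i : Fin n, ε ^ ((i : ℕ) + 1) * chiF (BSet Ω i) t)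
            (∑ i : Fin n, ε ^ ((i : ℕ) + 1) * gammaF Ω i) lam k h s := rfl
    rw [h2, h1]
    exact Finset.sum_congr rfl fun i _ =>
      Zq_smul σ τ (DSet Ω) (chiF (BSet Ω i)) (gammaF Ω i) lam (ε ^ ((i : ℕ) + 1)) k h s
  have hT1 := tendsto_Zq σ τ (DSet Ω) (rhoE Ω ε) (gE Ω ε) lam
    (rhoE_nonneg Ω hε0.le) (rhoE_le_one Ω hε0.le hε2) (gE_nonneg Ω hε0.le)
    (gE_le_one Ω hε0.le hε2) hlam0.le hlam1.le h s
  have hT2 : Tendsto (fun k => ∑ i : Fin n, ε ^ ((i : ℕ) + 1) *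
      Zq G σ τ (DSet Ω) (chiF (BSet Ω i)) (gammaF Ω i) lam k h s) atTop
      (𝓝 (∑ i : Fin n, ε ^ ((i : ℕ) + 1) *
        ZSup G σ τ (DSet Ω) (chiF (BSet Ω i)) (gammaF Ω i) lam h s)) := by
    refine tendsto_finset_sum _ fun i _ => ?_
    exact (tendsto_Zq σ τ (DSet Ω) (chiF (BSet Ω i)) (gammaF Ω i) lam
      (chiF_nonneg _) (chiF_le_one _) (gammaF_nonneg Ω i) (gammaF_le_one Ω i)
      hlam0.le hlam1.le h s).const_mul _
  exact tendsto_nhds_unique (hT1.congr hk) hT2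

theorem atom_reach_close {D B : Finset S} (hD : ∀ t ∈ D, G.Absorbing t) (hBD : B ⊆ D)
    (σ τ : Strategy G) (s : S) {η : ℝ} (hη : 0 < η) :
    ∃ δ : ℝ, 0 < δ ∧ ∀ lam : ℝ, 0 < lam → lam < 1 → 1 - lam ≤ δ →
      PReach G σ τ B [] s - η ≤ ZSup G σ τ D (chiF B) 0 lam [] s ∧
      ZSup G σ τ D (chiF B) 0 lam [] s ≤ PReach G σ τ B [] s := by
  obtain ⟨J, hJ⟩ := (Metric.tendsto_atTop.mp (tendsto_reachAux σ τ B [] s)) (η/2)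
    (by positivity)
  have hJ' : PReach G σ τ B [] s - η/2 ≤ reachAux G σ τ B J [] s := by
    have := hJ J le_rfl
    rw [Real.dist_eq] at this
    have := abs_lt.mp this
    linarith [this.1]
  refine ⟨η / (2 * (J + 1)), by positivity, fun lam hlam0 hlam1 hlamδ => ?_⟩
  constructor
  · -- lower bound
    have hbern : (1 : ℝ) - (J+1) * (1 - lam) ≤ lam ^ (J+1) := by
      have := one_add_mul_le_pow (a := lam - 1) (by linarith) (J+1)
      have h2 : (1 : ℝ) + (J+1) * (lam - 1) = 1 - (J+1) * (1 - lam) := by ring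
      calc (1 : ℝ) - (J+1) * (1 - lam) = 1 + (J+1) * (lam - 1) := by ring
        _ ≤ (1 + (lam - 1)) ^ (J+1) := by exact_mod_cast this
        _ = lam ^ (J+1) := by ring_nf
    have hpow : (1 : ℝ) - η/2 ≤ lam ^ (J+1) := by
      have : ((J : ℝ)+1) * (1 - lam) ≤ (J+1) * (η / (2 * (J+1))) :=
        mul_le_mul_of_nonneg_left hlamδ (by positivity)
      have h3 : ((J : ℝ)+1) * (η / (2 * (J+1))) = η/2 := by
        field_simp
      nlinarith
    have h4 := Zq_chi_ge_reach σ τ D lam hD hBD hlam0.le hlam1.le J [] s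
    have h5 := Zq_le_ZSup σ τ D (chiF B) 0 lam (chiF_le_one B) (by norm_num)
      hlam0.le hlam1.le (J+1) [] s
    have hr0 : 0 ≤ reachAux G σ τ B J [] s := reachAux_nonneg σ τ B J [] s
    have hr1 : reachAux G σ τ B J [] s ≤ 1 := reachAux_le_one σ τ B J [] s
    nlinarith [mul_le_mul_of_nonneg_right hpow hr0]
  · -- upper bound
    refine ciSup_le fun k => ?_
    exact (Zq_chi_le_reach σ τ D lam hBD hlam0.le hlam1.le k [] s).trans
      (reachAux_le_PReach σ τ B k [] s)

theorem atom_A_close (D : Finset S) (σ τ : Strategy G) (s : S) {η : ℝ} (hη : 0 < η) :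
    ∃ δ : ℝ, 0 < δ ∧ ∀ lam : ℝ, 0 < lam → lam < 1 → 1 - lam ≤ δ →
      (1 - PReach G σ τ D [] s) - η ≤ ZSup G σ τ D (fun _ => 0) 1 lam [] s ∧
      ZSup G σ τ D (fun _ => 0) 1 lam [] s ≤ (1 - PReach G σ τ D [] s) + η := by
  obtain ⟨J, hJ⟩ := (Metric.tendsto_atTop.mp (tendsto_reachAux σ τ D [] s)) (η/2)
    (by positivity)
  have hJ' : PReach G σ τ D [] s - η/2 ≤ reachAux G σ τ D J [] s := by
    have := hJ J le_rfl
    rw [Real.dist_eq] at this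
    have := abs_lt.mp this
    linarith [this.1]
  set c := 1 - PReach G σ τ D [] s with hc
  have hc0 : 0 ≤ c := by
    have := PReach_le_one σ τ D ([] : List (S × L)) s
    simp only [hc]; linarith
  have hc1 : c ≤ 1 := by
    have := PReach_nonneg σ τ D ([] : List (S × L)) s
    simp only [hc]; linarith
  refine ⟨η / (2 * (J + 1)), by positivity, fun lam hlam0 hlam1 hlamδ => ?_⟩
  have hform := Zq_A_formula σ τ D lam hlam1.le
  constructor
  · -- lower bound: ZSup ≥ c - η
    obtain ⟨k, hk⟩ := exists_pow_lt_of_lt_one hη hlam1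
    have hlow : (1 - lam ^ k) * c ≤ Zq G σ τ D (fun _ => 0) 1 lam k [] s := by
      rw [hform k [] s]
      have hterm : ∀ j ∈ Finset.range k, lam ^ j * c ≤ lam ^ j *
          (1 - reachAux G σ τ D j [] s) := by
        intro j _
        refine mul_le_mul_of_nonneg_left ?_ (by positivity)
        have := reachAux_le_PReach σ τ D j ([] : List (S × L)) s
        simp only [hc]; linarith
      have hsum := Finset.sum_le_sum hterm
      have hgeom : (1 - lam) * ∑ j ∈ Finset.range k, lam ^ j * c = (1 - lam ^ k) * c := by
        have : (∑ j ∈ Finset.range k, lam ^ j * c)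
            = (∑ j ∈ Finset.range k, lam ^ j) * c := by
          rw [Finset.sum_mul]
        rw [this, ← mul_assoc, geom_id]
      calc (1 - lam ^ k) * c = (1 - lam) * ∑ j ∈ Finset.range k, lam ^ j * c := hgeom.symm
        _ ≤ (1 - lam) * ∑ j ∈ Finset.range k, lam ^ j * (1 - reachAux G σ τ D j [] s) :=
            mul_le_mul_of_nonneg_left hsum (by linarith)
    have h5 := Zq_le_ZSup σ τ D (fun _ => 0) 1 lam (fun _ => by norm_num) le_rfl
      hlam0.le hlam1.le k [] s
    nlinarith [hk.le]
  · -- upper bound: ZSup ≤ c + η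
    refine ciSup_le fun k => ?_
    rw [hform k [] s]
    have haJ : 1 - reachAux G σ τ D J [] s ≤ c + η/2 := by
      simp only [hc]; linarith
    have hbound : (∑ j ∈ Finset.range k, lam ^ j * (1 - reachAux G σ τ D j [] s))
        ≤ (J + 1 : ℝ) + (1 - reachAux G σ τ D J [] s) * ∑ j ∈ Finset.range k, lam ^ j := by
      rw [← Finset.sum_filter_add_sum_filter_not (Finset.range k) (fun j => j ≤ J)]
      have hb1 : (∑ j ∈ (Finset.range k).filter (fun j => j ≤ J),
          lam ^ j * (1 - reachAux G σ τ D j [] s)) ≤ (J + 1 : ℝ) := by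
        have hsub : (Finset.range k).filter (fun j => j ≤ J) ⊆ Finset.range (J+1) := by
          intro j hj
          simp only [Finset.mem_filter, Finset.mem_range] at hj ⊢
          omega
        calc (∑ j ∈ (Finset.range k).filter (fun j => j ≤ J),
              lam ^ j * (1 - reachAux G σ τ D j [] s))
            ≤ ∑ j ∈ Finset.range (J+1), lam ^ j * (1 - reachAux G σ τ D j [] s) := by
              refine Finset.sum_le_sum_of_subset_of_nonneg hsub fun j _ _ => ?_
              have := reachAux_le_one σ τ D j ([] : List (S × L)) s
              have := pow_nonneg hlam0.le j
              nlinarith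
          _ ≤ ∑ j ∈ Finset.range (J+1), 1 := by
              refine Finset.sum_le_sum fun j _ => ?_
              have h1 := reachAux_nonneg σ τ D j ([] : List (S × L)) s
              have h2 := pow_le_one₀ hlam0.le hlam1.le (n := j)
              have h3 := pow_nonneg hlam0.le j
              have h4 := reachAux_le_one σ τ D j ([] : List (S × L)) s
              nlinarith
          _ = (J + 1 : ℝ) := by simp
      have hb2 : (∑ j ∈ (Finset.range k).filter (fun j => ¬ j ≤ J),
          lam ^ j * (1 - reachAux G σ τ D j [] s))
          ≤ (1 - reachAux G σ τ D J [] s) * ∑ j ∈ Finset.range k, lam ^ j := by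
        calc (∑ j ∈ (Finset.range k).filter (fun j => ¬ j ≤ J),
              lam ^ j * (1 - reachAux G σ τ D j [] s))
            ≤ ∑ j ∈ (Finset.range k).filter (fun j => ¬ j ≤ J),
              lam ^ j * (1 - reachAux G σ τ D J [] s) := by
              refine Finset.sum_le_sum fun j hj => ?_
              simp only [Finset.mem_filter, not_le] at hj
              refine mul_le_mul_of_nonneg_left ?_ (pow_nonneg hlam0.le j)
              have := reachAux_mono σ τ D (le_of_lt hj.2) ([] : List (S × L)) s
              linarith
          _ ≤ ∑ j ∈ Finset.range k, lam ^ j * (1 - reachAux G σ τ D J [] s) := by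
              refine Finset.sum_le_sum_of_subset_of_nonneg (Finset.filter_subset _ _)
                fun j _ _ => ?_
              have := reachAux_le_one σ τ D J ([] : List (S × L)) s
              have := pow_nonneg hlam0.le j
              nlinarith
          _ = (1 - reachAux G σ τ D J [] s) * ∑ j ∈ Finset.range k, lam ^ j := by
              rw [Finset.mul_sum]
              exact Finset.sum_congr rfl fun j _ => by ring
      linarith
    have hmul := mul_le_mul_of_nonneg_left hbound (by linarith : (0:ℝ) ≤ 1 - lam)
    have hgeo : (1 - lam) * ∑ j ∈ Finset.range k, lam ^ j ≤ 1 := by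
      rw [geom_id]
      have := pow_nonneg hlam0.le k
      linarith
    have hδJ : (1 - lam) * (J + 1 : ℝ) ≤ η/2 := by
      have : (1 - lam) * (J + 1 : ℝ) ≤ (η / (2 * (J + 1))) * (J + 1) :=
        mul_le_mul_of_nonneg_right hlamδ (by positivity)
      have h3 : (η / (2 * (J+1))) * ((J : ℝ)+1) = η/2 := by field_simp
      linarith [h3 ▸ this]
    have haJ0 : 0 ≤ 1 - reachAux G σ τ D J [] s := by
      have := reachAux_le_one σ τ D J ([] : List (S × L)) s
      linarith
    have hgeo0 : 0 ≤ (1 - lam) * ∑ j ∈ Finset.range k, lam ^ j := by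
      rw [geom_id]
      have := pow_le_one₀ hlam0.le hlam1.le (n := k)
      linarith
    calc (1 - lam) * ∑ j ∈ Finset.range k, lam ^ j * (1 - reachAux G σ τ D j [] s)
        ≤ (1 - lam) * ((J + 1 : ℝ) + (1 - reachAux G σ τ D J [] s)
            * ∑ j ∈ Finset.range k, lam ^ j) := hmul
      _ = (1 - lam) * (J + 1 : ℝ) + (1 - reachAux G σ τ D J [] s)
            * ((1 - lam) * ∑ j ∈ Finset.range k, lam ^ j) := by ring
      _ ≤ η/2 + (1 - reachAux G σ τ D J [] s) * 1 := by
          have := mul_le_mul_of_nonneg_left hgeo haJ0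
          nlinarith
      _ ≤ c + η := by
          rw [mul_one]
          linarith
  
end CompositeAux

/-! ### Scalar saddle points for fixed ε -/

section SaddleAux

open Filter Topology

variable {G : SG S L} {n : ℕ}

theorem gammaF_cases (Ω : Fin n → Obj S) (i : Fin n) :
    gammaF Ω i = 0 ∨ gammaF Ω i = 1 := by
  unfold gammaF objGamma
  rcases Ω i <;> simp

theorem mkMD_congr {c c' : S → L} (hc : ∀ s, c s ∈ G.Act s) (hc' : ∀ s, c' s ∈ G.Act s)
    (h : c = c') : mkMD G c hc = mkMD G c' hc' := by
  subst h
  rfl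

theorem ZSup_add_split (σ τ : Strategy G) (D B : Finset S) {lam : ℝ}
    (hlam0 : 0 < lam) (hlam1 : lam < 1) (s : S) :
    ZSup G σ τ D (chiF B) 1 lam [] s
      = ZSup G σ τ D (chiF B) 0 lam [] s + ZSup G σ τ D (fun _ => 0) 1 lam [] s := by
  have hk : ∀ k, Zq G σ τ D (chiF B) 1 lam k [] s
      = Zq G σ τ D (chiF B) 0 lam k [] s + Zq G σ τ D (fun _ => 0) 1 lam k [] s := by
    intro k
    have h1 := Zq_add σ τ D lam (chiF B) (fun _ => 0) 0 1 k [] s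
    have h2 : (fun t => chiF B t + (fun _ : S => (0:ℝ)) t) = chiF B := funext fun t => by simp
    rw [h2] at h1
    norm_num at h1
    exact h1
  have hT1 := tendsto_Zq σ τ D (chiF B) 1 lam (chiF_nonneg B) (chiF_le_one B)
    (by norm_num) (by norm_num) hlam0.le hlam1.le [] s
  have hT2 := (tendsto_Zq σ τ D (chiF B) 0 lam (chiF_nonneg B) (chiF_le_one B)
    le_rfl (by norm_num) hlam0.le hlam1.le [] s).add
    (tendsto_Zq σ τ D (fun _ => 0) 1 lam (fun _ => le_rfl) (fun _ => by norm_num)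
      (by norm_num) le_rfl hlam0.le hlam1.le [] s)
  exact tendsto_nhds_unique (hT1.congr hk) hT2

theorem atom_close (Ω : Fin n → Obj S) (habs : AbsorbingObj G Ω) (σ τ : Strategy G)
    (s : S) (i : Fin n) {η : ℝ} (hη : 0 < η) :
    ∃ δ : ℝ, 0 < δ ∧ ∀ lam : ℝ, 0 < lam → lam < 1 → 1 - lam ≤ δ →
      cPay G σ τ Ω i s - η
          ≤ ZSup G σ τ (DSet Ω) (chiF (BSet Ω i)) (gammaF Ω i) lam [] s ∧
      ZSup G σ τ (DSet Ω) (chiF (BSet Ω i)) (gammaF Ω i) lam [] s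
          ≤ cPay G σ τ Ω i s + η := by
  have hD := DSet_absorbing Ω habs
  have hBD := BSet_subset Ω i
  rcases gammaF_cases Ω i with hγ | hγ
  · obtain ⟨δ, hδ0, hδ⟩ := atom_reach_close hD hBD σ τ s hη
    refine ⟨δ, hδ0, fun lam h0 h1 h2 => ?_⟩
    obtain ⟨hl, hu⟩ := hδ lam h0 h1 h2
    rw [hγ]
    unfold cPay
    rw [hγ]
    constructor
    · linarith
    · linarith
  · obtain ⟨δ1, hδ10, hδ1⟩ := atom_reach_close hD hBD σ τ s (half_pos hη)
    obtain ⟨δ2, hδ20, hδ2⟩ := atom_A_close (G := G) (DSet Ω) σ τ s (half_pos hη)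
    refine ⟨min δ1 δ2, lt_min hδ10 hδ20, fun lam h0 h1 h2 => ?_⟩
    obtain ⟨hl1, hu1⟩ := hδ1 lam h0 h1 (h2.trans (min_le_left _ _))
    obtain ⟨hl2, hu2⟩ := hδ2 lam h0 h1 (h2.trans (min_le_right _ _))
    rw [hγ]
    have hsplit := ZSup_add_split σ τ (DSet Ω) (BSet Ω i) h0 h1 s
    rw [hsplit]
    unfold cPay
    rw [hγ]
    constructor
    · linarith
    · linarith

theorem composite_close (Ω : Fin n → Obj S) (hplain : ∀ i, (Ω i).Plain)
    (habs : AbsorbingObj G Ω) (σ τ : Strategy G) (s : S) {ε η : ℝ}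
    (hε0 : 0 < ε) (hε2 : ε ≤ 1/2) (hη : 0 < η) :
    ∃ δ : ℝ, 0 < δ ∧ ∀ lam : ℝ, 0 < lam → lam < 1 → 1 - lam ≤ δ →
      (∑ i : Fin n, ε ^ ((i : ℕ) + 1) * payoff G Ω σ τ [] s i) - η
          ≤ ZSup G σ τ (DSet Ω) (rhoE Ω ε) (gE Ω ε) lam [] s ∧
      ZSup G σ τ (DSet Ω) (rhoE Ω ε) (gE Ω ε) lam [] s
          ≤ (∑ i : Fin n, ε ^ ((i : ℕ) + 1) * payoff G Ω σ τ [] s i) + η := by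
  have hch : ∀ i : Fin n, ∃ δ : ℝ, 0 < δ ∧ ∀ lam : ℝ, 0 < lam → lam < 1 → 1 - lam ≤ δ →
      cPay G σ τ Ω i s - η
          ≤ ZSup G σ τ (DSet Ω) (chiF (BSet Ω i)) (gammaF Ω i) lam [] s ∧
      ZSup G σ τ (DSet Ω) (chiF (BSet Ω i)) (gammaF Ω i) lam [] s
          ≤ cPay G σ τ Ω i s + η := fun i => atom_close Ω habs σ τ s i hη
  choose δf hδf0 hδf using hch
  have hne : (insert (1:ℝ) (Finset.univ.image δf)).Nonempty := ⟨1, Finset.mem_insert_self _ _⟩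
  refine ⟨(insert (1:ℝ) (Finset.univ.image δf)).min' hne, ?_, ?_⟩
  · have hmem := Finset.min'_mem _ hne
    rcases Finset.mem_insert.mp hmem with h | h
    · rw [h]; norm_num
    · obtain ⟨i, _, hi⟩ := Finset.mem_image.mp h
      rw [← hi]; exact hδf0 i
  · intro lam h0 h1 h2
    have hδi : ∀ i : Fin n, 1 - lam ≤ δf i := by
      intro i
      refine h2.trans (Finset.min'_le _ _ ?_)
      exact Finset.mem_insert_of_mem (Finset.mem_image_of_mem δf (Finset.mem_univ i))
    have hbounds := fun i => hδf i lam h0 h1 (hδi i)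
    have hdecomp := ZSup_decomp Ω σ τ hε0 hε2 h0 h1 [] s
    have hsum_eps : (∑ i : Fin n, ε ^ ((i : ℕ) + 1)) ≤ 1 := sum_eps_pow_le_one ε hε0.le hε2
    have hpay : ∀ i, cPay G σ τ Ω i s = payoff G Ω σ τ [] s i :=
      fun i => cPay_eq_payoff σ τ Ω hplain habs i s
    rw [hdecomp]
    constructor
    · have hlo : ∀ i ∈ (Finset.univ : Finset (Fin n)),
          ε ^ ((i : ℕ) + 1) * (payoff G Ω σ τ [] s i - η)
            ≤ ε ^ ((i : ℕ) + 1) *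
              ZSup G σ τ (DSet Ω) (chiF (BSet Ω i)) (gammaF Ω i) lam [] s := by
        intro i _
        refine mul_le_mul_of_nonneg_left ?_ (by positivity)
        rw [← hpay i]
        exact (hbounds i).1
      have hsum := Finset.sum_le_sum hlo
      have heq : ∑ i : Fin n, ε ^ ((i : ℕ) + 1) * (payoff G Ω σ τ [] s i - η)
          = (∑ i : Fin n, ε ^ ((i : ℕ) + 1) * payoff G Ω σ τ [] s i)
            - η * ∑ i : Fin n, ε ^ ((i : ℕ) + 1) := by
        rw [Finset.mul_sum, ← Finset.sum_sub_distrib]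
        exact Finset.sum_congr rfl fun i _ => by ring
      have hη1 : η * ∑ i : Fin n, ε ^ ((i : ℕ) + 1) ≤ η :=  by
        nlinarith [hsum_eps]
      rw [heq] at hsum
      linarith
    · have hhi : ∀ i ∈ (Finset.univ : Finset (Fin n)),
          ε ^ ((i : ℕ) + 1) *
              ZSup G σ τ (DSet Ω) (chiF (BSet Ω i)) (gammaF Ω i) lam [] s
            ≤ ε ^ ((i : ℕ) + 1) * (payoff G Ω σ τ [] s i + η) := by
        intro i _
        refine mul_le_mul_of_nonneg_left ?_ (by positivity)
        rw [← hpay i]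
        exact (hbounds i).2
      have hsum := Finset.sum_le_sum hhi
      have heq : ∑ i : Fin n, ε ^ ((i : ℕ) + 1) * (payoff G Ω σ τ [] s i + η)
          = (∑ i : Fin n, ε ^ ((i : ℕ) + 1) * payoff G Ω σ τ [] s i)
            + η * ∑ i : Fin n, ε ^ ((i : ℕ) + 1) := by
        rw [Finset.mul_sum, ← Finset.sum_add_distrib]
        exact Finset.sum_congr rfl fun i _ => by ring
      have hη1 : η * ∑ i : Fin n, ε ^ ((i : ℕ) + 1) ≤ η := by
        nlinarith [hsum_eps]
      rw [heq] at hsum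
      linarith

theorem scalar_saddle (Ω : Fin n → Obj S) (hplain : ∀ i, (Ω i).Plain)
    (habs : AbsorbingObj G Ω) {ε : ℝ} (hε0 : 0 < ε) (hε2 : ε ≤ 1/2) :
    ∃ (cσ : S → L) (hcσ : ∀ s, cσ s ∈ G.Act s) (cτ : S → L) (hcτ : ∀ s, cτ s ∈ G.Act s),
      ∀ s : S,
        (∀ τ : Strategy G,
          ∑ i : Fin n, ε ^ ((i : ℕ) + 1) * payoff G Ω (mkMD G cσ hcσ) (mkMD G cτ hcτ) [] s i
            ≤ ∑ i : Fin n, ε ^ ((i : ℕ) + 1) * payoff G Ω (mkMD G cσ hcσ) τ [] s i) ∧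
        (∀ σ : Strategy G,
          ∑ i : Fin n, ε ^ ((i : ℕ) + 1) * payoff G Ω σ (mkMD G cτ hcτ) [] s i
            ≤ ∑ i : Fin n, ε ^ ((i : ℕ) + 1) * payoff G Ω (mkMD G cσ hcσ) (mkMD G cτ hcτ) [] s i) := by
  classical
  set D := DSet Ω with hD
  set ρ := rhoE Ω ε with hρ
  set g := gE Ω ε with hg
  have hρ0 := rhoE_nonneg Ω hε0.le
  have hρ1 := rhoE_le_one Ω hε0.le hε2
  have hg0 := gE_nonneg Ω hε0.le
  have hg1 := gE_le_one Ω hε0.le hε2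
  set lamf : ℕ → ℝ := fun j => 1 - 1 / ((j : ℝ) + 2) with hlamf
  have hlam0 : ∀ j, 0 < lamf j := by
    intro j
    have h2 : (2:ℝ) ≤ (j : ℝ) + 2 := by
      have := Nat.cast_nonneg (α := ℝ) j
      linarith
    have : 1 / ((j:ℝ) + 2) ≤ 1/2 := by
      apply one_div_le_one_div_of_le <;> linarith
    simp only [hlamf]
    linarith
  have hlam1 : ∀ j, lamf j < 1 := by
    intro j
    have h2 : (0:ℝ) < (j : ℝ) + 2 := by positivity
    have : 0 < 1 / ((j:ℝ) + 2) := by positivity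
    simp only [hlamf]
    linarith
  have hlamsub : ∀ j, 1 - lamf j = 1 / ((j : ℝ) + 2) := by
    intro j
    simp only [hlamf]
    ring
  -- fixpoints and argmax/argmin choices
  choose w hw using fun j : ℕ =>
    exists_bell_fix (G := G) D ρ g (lamf j) hρ0 hρ1 hg0 hg1 (hlam0 j) (hlam1 j)
  choose cσf hcσmem hcσval using fun j : ℕ => exists_argmax (G := G) (w j)
  choose cτf hcτmem hcτval using fun j : ℕ => exists_argmin (G := G) (w j)
  obtain ⟨⟨Cσ, Cτ⟩, hfreq⟩ := exists_freq (fun j => (cσf j, cτf j))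
  obtain ⟨j0, _, hj0⟩ := hfreq 0
  have hCσmem : ∀ s, Cσ s ∈ G.Act s := by
    have h1 : cσf j0 = Cσ := congrArg Prod.fst hj0
    rw [← h1]; exact hcσmem j0
  have hCτmem : ∀ s, Cτ s ∈ G.Act s := by
    have h1 : cτf j0 = Cτ := congrArg Prod.snd hj0
    rw [← h1]; exact hcτmem j0
  refine ⟨Cσ, hCσmem, Cτ, hCτmem, fun s => ⟨?_, ?_⟩⟩
  · -- Max side: against any τ
    intro τ
    refine le_of_forall_pos_le_add fun η hη => ?_
    obtain ⟨δ1, hδ10, hδ1⟩ := composite_close Ω hplain habs (mkMD G Cσ hCσmem) τ s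
      hε0 hε2 (half_pos hη)
    obtain ⟨δ2, hδ20, hδ2⟩ := composite_close Ω hplain habs (mkMD G Cσ hCσmem)
      (mkMD G Cτ hCτmem) s hε0 hε2 (half_pos hη)
    set δ := min δ1 δ2 with hδdef
    have hδ0 : 0 < δ := lt_min hδ10 hδ20
    obtain ⟨j, hjN, hjeq⟩ := hfreq (Nat.ceil (1/δ))
    have hjδ : 1 - lamf j ≤ δ := by
      rw [hlamsub j]
      have hceil : 1/δ ≤ (Nat.ceil (1/δ) : ℝ) := Nat.le_ceil _
      have hjj : (Nat.ceil (1/δ) : ℝ) ≤ (j : ℝ) := by exact_mod_cast hjN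
      have hj2 : (0:ℝ) < (j:ℝ) + 2 := by positivity
      rw [div_le_iff₀ hj2]
      have h1δ : 1/δ ≤ (j:ℝ) + 2 := by linarith
      calc (1:ℝ) = δ * (1/δ) := by field_simp
        _ ≤ δ * ((j:ℝ) + 2) := mul_le_mul_of_nonneg_left h1δ hδ0.le
    have hσeq : mkMD G (cσf j) (hcσmem j) = mkMD G Cσ hCσmem :=
      mkMD_congr _ _ (congrArg Prod.fst hjeq)
    have hτeq : mkMD G (cτf j) (hcτmem j) = mkMD G Cτ hCτmem :=
      mkMD_congr _ _ (congrArg Prod.snd hjeq)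
    have hA : w j s ≤ ZSup G (mkMD G Cσ hCσmem) τ D ρ g (lamf j) [] s := by
      rw [← hσeq]
      exact ZSup_ge_fix D ρ g (lamf j) hρ1 hg1 (hlam0 j) (hlam1 j) (w j) (hw j).1
        (hw j).2 (cσf j) (hcσmem j) (hcσval j) τ [] s
    have hB : ZSup G (mkMD G Cσ hCσmem) (mkMD G Cτ hCτmem) D ρ g (lamf j) [] s ≤ w j s := by
      rw [← hτeq]
      exact ZSup_le_fix D ρ g (lamf j) hρ0 hρ1 hg0 hg1 (hlam0 j) (hlam1 j) (w j) (hw j).1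
        (hw j).2 (cτf j) (hcτmem j) (hcτval j) (mkMD G Cσ hCσmem) [] s
    obtain ⟨hl1, hu1⟩ := hδ1 (lamf j) (hlam0 j) (hlam1 j) (hjδ.trans (min_le_left _ _))
    obtain ⟨hl2, hu2⟩ := hδ2 (lamf j) (hlam0 j) (hlam1 j) (hjδ.trans (min_le_right _ _))
    linarith
  · -- Min side: against any σ
    intro σ
    refine le_of_forall_pos_le_add fun η hη => ?_
    obtain ⟨δ1, hδ10, hδ1⟩ := composite_close Ω hplain habs σ (mkMD G Cτ hCτmem) s
      hε0 hε2 (half_pos hη)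
    obtain ⟨δ2, hδ20, hδ2⟩ := composite_close Ω hplain habs (mkMD G Cσ hCσmem)
      (mkMD G Cτ hCτmem) s hε0 hε2 (half_pos hη)
    set δ := min δ1 δ2 with hδdef
    have hδ0 : 0 < δ := lt_min hδ10 hδ20
    obtain ⟨j, hjN, hjeq⟩ := hfreq (Nat.ceil (1/δ))
    have hjδ : 1 - lamf j ≤ δ := by
      rw [hlamsub j]
      have hceil : 1/δ ≤ (Nat.ceil (1/δ) : ℝ) := Nat.le_ceil _
      have hjj : (Nat.ceil (1/δ) : ℝ) ≤ (j : ℝ) := by exact_mod_cast hjN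
      have hj2 : (0:ℝ) < (j:ℝ) + 2 := by positivity
      rw [div_le_iff₀ hj2]
      have h1δ : 1/δ ≤ (j:ℝ) + 2 := by linarith
      calc (1:ℝ) = δ * (1/δ) := by field_simp
        _ ≤ δ * ((j:ℝ) + 2) := mul_le_mul_of_nonneg_left h1δ hδ0.le
    have hσeq : mkMD G (cσf j) (hcσmem j) = mkMD G Cσ hCσmem :=
      mkMD_congr _ _ (congrArg Prod.fst hjeq)
    have hτeq : mkMD G (cτf j) (hcτmem j) = mkMD G Cτ hCτmem :=
      mkMD_congr _ _ (congrArg Prod.snd hjeq)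
    have hA : ZSup G σ (mkMD G Cτ hCτmem) D ρ g (lamf j) [] s ≤ w j s := by
      rw [← hτeq]
      exact ZSup_le_fix D ρ g (lamf j) hρ0 hρ1 hg0 hg1 (hlam0 j) (hlam1 j) (w j) (hw j).1
        (hw j).2 (cτf j) (hcτmem j) (hcτval j) σ [] s
    have hB : w j s ≤ ZSup G (mkMD G Cσ hCσmem) (mkMD G Cτ hCτmem) D ρ g (lamf j) [] s := by
      rw [← hσeq]
      exact ZSup_ge_fix D ρ g (lamf j) hρ1 hg1 (hlam0 j) (hlam1 j) (w j) (hw j).1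
        (hw j).2 (cσf j) (hcσmem j) (hcσval j) (mkMD G Cτ hCτmem) [] s
    obtain ⟨hl1, hu1⟩ := hδ1 (lamf j) (hlam0 j) (hlam1 j) (hjδ.trans (min_le_left _ _))
    obtain ⟨hl2, hu2⟩ := hδ2 (lamf j) (hlam0 j) (hlam1 j) (hjδ.trans (min_le_right _ _))
    linarith

end SaddleAux

/-- **Existence of MD lex-optimal strategies in the absorbing case.**
For every SG `G` and every absorbing lex-objective `Ω`, the lex-value `v` exists and
there are memoryless deterministic lex-optimal strategies for both players:
an MD strategy `σ` of Max with `inf_τ P_s^{σ,τ}(Ω) = v s` (w.r.t. `≤_lex`) for all `s`,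
and an MD strategy `τ` of Min with `sup_σ P_s^{σ,τ}(Ω) = v s` for all `s`. -/
theorem md_lex_optimal_exists {S L : Type} [Fintype S] [DecidableEq S] [Nonempty S]
    [Fintype L] [DecidableEq L] (G : SG S L) {n : ℕ} (Ω : Fin n → Obj S)
    (hplain : ∀ i, (Ω i).Plain) (habs : AbsorbingObj G Ω) :
    ∃ v : S → Fin n → ℝ, (∀ s, IsLexValue G Ω s (v s)) ∧
      (∃ σ : Strategy G, σ.MD ∧ MaxOptimal G Ω σ v) ∧
      (∃ τ : Strategy G, τ.MD ∧ MinOptimal G Ω τ v) := by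
  classical
  set εf : ℕ → ℝ := fun m => 1 / ((m : ℝ) + 2) with hεf
  have hε0 : ∀ m, 0 < εf m := by
    intro m
    simp only [hεf]
    positivity
  have hε2 : ∀ m, εf m ≤ 1/2 := by
    intro m
    simp only [hεf]
    have h2 : (2:ℝ) ≤ (m : ℝ) + 2 := by
      have := Nat.cast_nonneg (α := ℝ) m
      linarith
    apply one_div_le_one_div_of_le <;> linarith
  choose cσf hcσmem cτf hcτmem hsad using fun m : ℕ =>
    scalar_saddle Ω hplain habs (hε0 m) (hε2 m)
  obtain ⟨⟨Cσ, Cτ⟩, hfreq⟩ := exists_freq (fun m => (cσf m, cτf m))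
  obtain ⟨m0, _, hm0⟩ := hfreq 0
  have hCσmem : ∀ s, Cσ s ∈ G.Act s := by
    have h1 : cσf m0 = Cσ := congrArg Prod.fst hm0
    rw [← h1]; exact hcσmem m0
  have hCτmem : ∀ s, Cτ s ∈ G.Act s := by
    have h1 : cτf m0 = Cτ := congrArg Prod.snd hm0
    rw [← h1]; exact hcτmem m0
  set σs := mkMD G Cσ hCσmem with hσs
  set τs := mkMD G Cτ hCτmem with hτs
  set v : S → Fin n → ℝ := fun s => payoff G Ω σs τs [] s with hv
  have keyA : ∀ (s : S) (τ : Strategy G), lexLe (v s) (payoff G Ω σs τ [] s) := by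
    intro s τ
    refine lexLe_of_eps (fun i => ?_) (fun δ hδ => ?_)
    · have h1 := payoff_mem01 σs τs Ω hplain i s
      have h2 := payoff_mem01 σs τ Ω hplain i s
      simp only [hv]
      linarith [h1.1, h1.2, h2.1, h2.2]
    · obtain ⟨m, hmN, hmeq⟩ := hfreq (Nat.ceil (1/δ))
      refine ⟨εf m, hε0 m, ?_, ?_⟩
      · simp only [hεf]
        have hceil : 1/δ ≤ (Nat.ceil (1/δ) : ℝ) := Nat.le_ceil _
        have hjj : (Nat.ceil (1/δ) : ℝ) ≤ (m : ℝ) := by exact_mod_cast hmN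
        have hm2 : (0:ℝ) < (m:ℝ) + 2 := by positivity
        rw [div_le_iff₀ hm2]
        have h1δ : 1/δ ≤ (m:ℝ) + 2 := by linarith
        calc (1:ℝ) = δ * (1/δ) := by field_simp
          _ ≤ δ * ((m:ℝ) + 2) := mul_le_mul_of_nonneg_left h1δ hδ.le
      · have hσeq : mkMD G (cσf m) (hcσmem m) = σs :=
          mkMD_congr _ _ (congrArg Prod.fst hmeq)
        have hτeq : mkMD G (cτf m) (hcτmem m) = τs :=
          mkMD_congr _ _ (congrArg Prod.snd hmeq)
        have := (hsad m s).1 τ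
        rw [hσeq, hτeq] at this
        simpa only [hv] using this
  have keyB : ∀ (s : S) (σ : Strategy G), lexLe (payoff G Ω σ τs [] s) (v s) := by
    intro s σ
    refine lexLe_of_eps (fun i => ?_) (fun δ hδ => ?_)
    · have h1 := payoff_mem01 σs τs Ω hplain i s
      have h2 := payoff_mem01 σ τs Ω hplain i s
      simp only [hv]
      linarith [h1.1, h1.2, h2.1, h2.2]
    · obtain ⟨m, hmN, hmeq⟩ := hfreq (Nat.ceil (1/δ))
      refine ⟨εf m, hε0 m, ?_, ?_⟩
      · simp only [hεf]
        have hceil : 1/δ ≤ (Nat.ceil (1/δ) : ℝ) := Nat.le_ceil _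
        have hjj : (Nat.ceil (1/δ) : ℝ) ≤ (m : ℝ) := by exact_mod_cast hmN
        have hm2 : (0:ℝ) < (m:ℝ) + 2 := by positivity
        rw [div_le_iff₀ hm2]
        have h1δ : 1/δ ≤ (m:ℝ) + 2 := by linarith
        calc (1:ℝ) = δ * (1/δ) := by field_simp
          _ ≤ δ * ((m:ℝ) + 2) := mul_le_mul_of_nonneg_left h1δ hδ.le
      · have hσeq : mkMD G (cσf m) (hcσmem m) = σs :=
          mkMD_congr _ _ (congrArg Prod.fst hmeq)
        have hτeq : mkMD G (cτf m) (hcτmem m) = τs :=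
          mkMD_congr _ _ (congrArg Prod.snd hmeq)
        have := (hsad m s).2 σ
        rw [hσeq, hτeq] at this
        simpa only [hv] using this
  have hMaxOpt : MaxOptimal G Ω σs v := by
    intro s
    constructor
    · rintro y ⟨τ, rfl⟩
      exact keyA s τ
    · intro u hu
      have := hu (payoff G Ω σs τs [] s) ⟨τs, rfl⟩
      simpa only [hv] using this
  have hMinOpt : MinOptimal G Ω τs v := by
    intro s
    constructor
    · rintro y ⟨σ, rfl⟩
      exact keyB s σ
    · intro u hu
      have := hu (payoff G Ω σs τs [] s) ⟨σs, rfl⟩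
      simpa only [hv] using this
  refine ⟨v, fun s => ⟨?_, ?_⟩, ⟨σs, mkMD_MD G Cσ hCσmem, hMaxOpt⟩,
    ⟨τs, mkMD_MD G Cτ hCτmem, hMinOpt⟩⟩
  · rintro x ⟨σ, hGLB⟩
    have h1 : lexLe x (payoff G Ω σ τs [] s) := hGLB.1 _ ⟨τs, rfl⟩
    exact lexLe_trans h1 (keyB s σ)
  · intro u hu
    exact hu (v s) ⟨σs, hMaxOpt s⟩
end

section
/- Unique fixpoint characterization of reachability probabilities in finite Markov chains: Let (S, P) be a Markov chain on a finite state space S and let T ⊆ S. Then the function v(s) = P_s(Reach(T)) is the unique function x : S → [0,1] satisfying: x(s) = 1 for all s ∈ T; x(s) = 0 for all s from which T is not reachable in the directed graph on S with an edge from s to s' whenever P(s,s') > 0; and x(s) = Σ_{s'} P(s,s')·x(s') for all remaining s. -/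
open scoped Classical

/-- A Markov chain on a state space `S`: a transition function whose rows are
probability distributions. -/
structure MC (S : Type) where
  P : S → S → ℝ
  nonneg : ∀ s s', 0 ≤ P s s'
  sum_one : ∀ s, HasSum (P s) 1

/-- Probability of reaching `T` from `s` within `k` steps. -/
noncomputable def MC.reachAux {S : Type} (M : MC S) (T : Set S) : ℕ → S → ℝ
  | 0, s => if s ∈ T then 1 else 0
  | k + 1, s => if s ∈ T then 1 else ∑' s', M.P s s' * M.reachAux T k s'

/-- `P_s(Reach T)`: the probability (under the path measure of the Markov chain
started at `s`) of the set of infinite paths that eventually visit `T`, obtained as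
the supremum of the step-bounded reachability probabilities. -/
noncomputable def MC.PReach {S : Type} (M : MC S) (T : Set S) (s : S) : ℝ :=
  ⨆ k : ℕ, M.reachAux T k s

/-- `T` is reachable from `s` in the directed graph of positive-probability
transitions. -/
def MC.Reachable {S : Type} (M : MC S) (s : S) (T : Set S) : Prop :=
  ∃ t ∈ T, Relation.ReflTransGen (fun u u' => 0 < M.P u u') s t

namespace MCaux
variable {S : Type} [Fintype S] (M : MC S) (T : Set S)

lemma sum_row (s : S) : ∑ s', M.P s s' = 1 :=
  ((M.sum_one s).unique (hasSum_fintype _)).symm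

lemma aux_succ (k : ℕ) (s : S) (hs : s ∉ T) :
    M.reachAux T (k+1) s = ∑ s', M.P s s' * M.reachAux T k s' := by
  simp [MC.reachAux, hs, tsum_fintype]

lemma aux_nonneg : ∀ k s, 0 ≤ M.reachAux T k s := by
  intro k
  induction k with
  | zero => intro s; simp only [MC.reachAux]; positivity
  | succ k ih =>
    intro s
    by_cases hs : s ∈ T
    · simp [MC.reachAux, hs]
    · rw [aux_succ M T k s hs]
      exact Finset.sum_nonneg fun s' _ => mul_nonneg (M.nonneg s s') (ih s')

lemma aux_le_one : ∀ k s, M.reachAux T k s ≤ 1 := by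
  intro k
  induction k with
  | zero => intro s; simp only [MC.reachAux]; split <;> norm_num
  | succ k ih =>
    intro s
    by_cases hs : s ∈ T
    · simp [MC.reachAux, hs]
    · rw [aux_succ M T k s hs]
      calc ∑ s', M.P s s' * M.reachAux T k s' ≤ ∑ s', M.P s s' * 1 :=
            Finset.sum_le_sum fun s' _ =>
              mul_le_mul_of_nonneg_left (ih s') (M.nonneg s s')
        _ = 1 := by simp [sum_row M]

lemma aux_mono (s : S) : Monotone fun k => M.reachAux T k s := by
  have key : ∀ k s, M.reachAux T k s ≤ M.reachAux T (k+1) s := by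
    intro k
    induction k with
    | zero =>
      intro s
      by_cases hs : s ∈ T
      · simp [MC.reachAux, hs]
      · rw [aux_succ M T 0 s hs]
        simp only [MC.reachAux, if_neg hs]
        exact Finset.sum_nonneg fun s' _ =>
          mul_nonneg (M.nonneg s s') (aux_nonneg M T 0 s')
    | succ k ih =>
      intro s
      by_cases hs : s ∈ T
      · simp [MC.reachAux, hs]
      · rw [aux_succ M T k s hs, aux_succ M T (k+1) s hs]
        exact Finset.sum_le_sum fun s' _ =>
          mul_le_mul_of_nonneg_left (ih s') (M.nonneg s s')
  exact monotone_nat_of_le_succ fun k => key k s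

lemma bdd (s : S) : BddAbove (Set.range fun k => M.reachAux T k s) :=
  ⟨1, fun y ⟨k, hk⟩ => hk ▸ aux_le_one M T k s⟩

lemma tendsto_aux (s : S) :
    Filter.Tendsto (fun k => M.reachAux T k s) Filter.atTop (nhds (M.PReach T s)) :=
  tendsto_atTop_ciSup (aux_mono M T s) (bdd M T s)

lemma preach_mem (s : S) : M.PReach T s ∈ Set.Icc (0:ℝ) 1 :=
  ⟨le_ciSup_of_le (bdd M T s) 0 (aux_nonneg M T 0 s),
   ciSup_le fun k => aux_le_one M T k s⟩

lemma preach_one (s : S) (hs : s ∈ T) : M.PReach T s = 1 := by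
  have : ∀ k, M.reachAux T k s = 1 := by
    intro k; cases k <;> simp [MC.reachAux, hs]
  simp [MC.PReach, this]

lemma aux_unreach : ∀ k s, ¬ M.Reachable s T → M.reachAux T k s = 0 := by
  intro k
  induction k with
  | zero =>
    intro s hs
    have hT : s ∉ T := fun h => hs ⟨s, h, .refl⟩
    simp [MC.reachAux, hT]
  | succ k ih =>
    intro s hs
    have hT : s ∉ T := fun h => hs ⟨s, h, .refl⟩
    rw [aux_succ M T k s hT]
    refine Finset.sum_eq_zero fun s' _ => ?_
    rcases (M.nonneg s s').lt_or_eq with hp | hp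
    · have hs' : ¬ M.Reachable s' T := fun ⟨t, ht, hrt⟩ => hs ⟨t, ht, .head hp hrt⟩
      simp [ih s' hs']
    · simp [← hp]

lemma preach_unreach (s : S) (hs : ¬ M.Reachable s T) : M.PReach T s = 0 := by
  simp [MC.PReach, fun k => aux_unreach M T k s hs]

lemma preach_fix (s : S) (hs : s ∉ T) :
    M.PReach T s = ∑ s', M.P s s' * M.PReach T s' := by
  have h1 : Filter.Tendsto (fun k => M.reachAux T (k+1) s) Filter.atTop
      (nhds (M.PReach T s)) :=
    (tendsto_aux M T s).comp (Filter.tendsto_add_atTop_nat 1)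
  have h2 : Filter.Tendsto (fun k => ∑ s', M.P s s' * M.reachAux T k s')
      Filter.atTop (nhds (∑ s', M.P s s' * M.PReach T s')) :=
    tendsto_finset_sum _ fun s' _ => (tendsto_aux M T s').const_mul _
  have h3 : (fun k => M.reachAux T (k+1) s)
      = fun k => ∑ s', M.P s s' * M.reachAux T k s' := by
    funext k; exact aux_succ M T k s hs
  rw [h3] at h1
  exact tendsto_nhds_unique h1 h2

lemma zero_of_fixpoint (y : S → ℝ)
    (hT : ∀ s ∈ T, y s = 0)
    (hU : ∀ s, ¬ M.Reachable s T → y s = 0)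
    (hF : ∀ s, s ∉ T → M.Reachable s T → y s = ∑ s', M.P s s' * y s') :
    ∀ s, y s = 0 := by
  by_contra h
  push_neg at h
  obtain ⟨s₀, hs₀⟩ := h
  have hne : (Finset.univ : Finset S).Nonempty := ⟨s₀, Finset.mem_univ s₀⟩
  set c := Finset.univ.sup' hne (fun s => |y s|) with hc
  have hle : ∀ s, |y s| ≤ c := fun s => hc ▸ Finset.le_sup' (fun s => |y s|) (Finset.mem_univ s)
  have hcpos : 0 < c := lt_of_lt_of_le (abs_pos.mpr hs₀) (hle s₀)
  have step : ∀ s, |y s| = c → ∀ s', 0 < M.P s s' → |y s'| = c := by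
    intro s hs s' hp
    have hys : y s ≠ 0 := abs_pos.mp (hs ▸ hcpos)
    have hsT : s ∉ T := fun hmem => hys (hT s hmem)
    have hsR : M.Reachable s T := by
      by_contra hr; exact hys (hU s hr)
    have heq := hF s hsT hsR
    have h1 : c ≤ ∑ t, M.P s t * |y t| := by
      calc c = |y s| := hs.symm
        _ = |∑ t, M.P s t * y t| := by rw [heq]
        _ ≤ ∑ t, |M.P s t * y t| := Finset.abs_sum_le_sum_abs _ _
        _ = ∑ t, M.P s t * |y t| := by
            refine Finset.sum_congr rfl fun t _ => ?_
            rw [abs_mul, abs_of_nonneg (M.nonneg s t)]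
    have h2 : ∑ t, M.P s t * (c - |y t|) ≤ 0 := by
      have : ∑ t, M.P s t * (c - |y t|)
          = (∑ t, M.P s t) * c - ∑ t, M.P s t * |y t| := by
        rw [Finset.sum_mul]
        rw [← Finset.sum_sub_distrib]
        exact Finset.sum_congr rfl fun t _ => by ring
      rw [this, sum_row M, one_mul]
      linarith
    have h3 : ∀ t ∈ Finset.univ, (0:ℝ) ≤ M.P s t * (c - |y t|) :=
      fun t _ => mul_nonneg (M.nonneg s t) (by linarith [hle t])
    have h4 : ∑ t, M.P s t * (c - |y t|) = 0 :=
      le_antisymm h2 (Finset.sum_nonneg h3)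
    have h5 := (Finset.sum_eq_zero_iff_of_nonneg h3).mp h4 s' (Finset.mem_univ s')
    have h6 : c - |y s'| = 0 := by
      rcases mul_eq_zero.mp h5 with h | h
      · exact absurd h hp.ne'
      · exact h
    linarith
  -- find max attaining state reachable to T
  have hys₀c : |y s₀| = c ∨ True := Or.inr trivial
  obtain ⟨sm, _, hsm⟩ := Finset.exists_mem_eq_sup' hne (fun s => |y s|)
  have hsmc : |y sm| = c := hsm.symm
  have hysm : y sm ≠ 0 := abs_pos.mp (hsmc ▸ hcpos)
  have hsmR : M.Reachable sm T := by
    by_contra hr; exact hysm (hU sm hr)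
  obtain ⟨t, htT, hrt⟩ := hsmR
  have : ∀ u, Relation.ReflTransGen (fun a b => 0 < M.P a b) sm u → |y u| = c := by
    intro u hru
    induction hru with
    | refl => exact hsmc
    | tail _ hstep ih => exact step _ ih _ hstep
  have hytc : |y t| = c := this t hrt
  rw [hT t htT] at hytc
  simp at hytc
  exact absurd hytc.symm hcpos.ne'

end MCaux

/-- **Unique fixpoint characterization of reachability probabilities in finite MCs.**
For a Markov chain on a finite state space and `T ⊆ S`, the function
`v(s) = P_s(Reach T)` is the unique `[0,1]`-valued function `x` with `x = 1` on `T`,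
`x = 0` on the states from which `T` is not reachable, and
`x(s) = Σ_{s'} P(s,s')·x(s')` for all remaining states `s`. -/
theorem reach_prob_unique_fixpoint {S : Type} [Fintype S] (M : MC S) (T : Set S) :
    ((∀ s, M.PReach T s ∈ Set.Icc (0 : ℝ) 1) ∧
      (∀ s ∈ T, M.PReach T s = 1) ∧
      (∀ s, ¬ M.Reachable s T → M.PReach T s = 0) ∧
      (∀ s, s ∉ T → M.Reachable s T → M.PReach T s = ∑' s', M.P s s' * M.PReach T s')) ∧
    ∀ x : S → ℝ,
      ((∀ s, x s ∈ Set.Icc (0 : ℝ) 1) ∧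
        (∀ s ∈ T, x s = 1) ∧
        (∀ s, ¬ M.Reachable s T → x s = 0) ∧
        (∀ s, s ∉ T → M.Reachable s T → x s = ∑' s', M.P s s' * x s')) →
      x = M.PReach T := by
  constructor
  · refine ⟨MCaux.preach_mem M T, MCaux.preach_one M T, MCaux.preach_unreach M T, ?_⟩
    intro s hs _
    rw [tsum_fintype]
    exact MCaux.preach_fix M T s hs
  · rintro x ⟨hx01, hxT, hxU, hxF⟩
    funext s
    have key := MCaux.zero_of_fixpoint M T (fun s => x s - M.PReach T s) ?hT ?hU ?hF
    · have := key s
      linarith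
    case hT =>
      intro s hs
      rw [hxT s hs, MCaux.preach_one M T s hs]
      ring
    case hU =>
      intro s hs
      rw [hxU s hs, MCaux.preach_unreach M T s hs]
      ring
    case hF =>
      intro s hsT hsR
      rw [hxF s hsT hsR, tsum_fintype, MCaux.preach_fix M T s hsT,
        ← Finset.sum_sub_distrib]
      exact Finset.sum_congr rfl fun t _ => by ring
end

section
/- Finite Markov chains almost surely enter a bottom strongly connected component: Let (S, P) be a Markov chain on a finite state space S. Then for every state s, the set of states that belong to some bottom strongly connected component (BSCC) is reached almost surely: P_s(Reach(⋃{B : B is a BSCC})) = 1. Consequently, for every T ⊆ S, if P_s(Reach(T)) < 1 then there exists a BSCC B with B ∩ T = ∅ and P_s(Reach(B)) > 0. -/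
open scoped Classical

def MC.IsBSCC {S : Type} (M : MC S) (B : Set S) : Prop :=
  B.Nonempty ∧ (∀ b ∈ B, ∀ s', 0 < M.P b s' → s' ∈ B) ∧
    ∀ b ∈ B, ∀ b' ∈ B, Relation.ReflTransGen (fun u u' => 0 < M.P u u') b b'

namespace MCproof
variable {S : Type} [Fintype S] (M : MC S)

lemma row_sum (s : S) : ∑ s', M.P s s' = 1 := by
  have := (M.sum_one s).tsum_eq
  rwa [tsum_fintype] at this

lemma reachAux_succ (T : Set S) (k : ℕ) (s : S) :
    M.reachAux T (k+1) s = if s ∈ T then 1 else ∑ s', M.P s s' * M.reachAux T k s' := by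
  rw [MC.reachAux, tsum_fintype]

lemma reachAux_nonneg (T : Set S) : ∀ k s, 0 ≤ M.reachAux T k s
  | 0, s => by rw [MC.reachAux]; split <;> norm_num
  | k+1, s => by
      rw [reachAux_succ]
      split
      · norm_num
      · exact Finset.sum_nonneg fun s' _ =>
          mul_nonneg (M.nonneg s s') (reachAux_nonneg T k s')

lemma reachAux_le_one (T : Set S) : ∀ k s, M.reachAux T k s ≤ 1
  | 0, s => by rw [MC.reachAux]; split <;> norm_num
  | k+1, s => by
      rw [reachAux_succ]
      split
      · exact le_refl 1
      · calc ∑ s', M.P s s' * M.reachAux T k s'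
            ≤ ∑ s', M.P s s' * 1 :=
              Finset.sum_le_sum fun s' _ =>
                mul_le_mul_of_nonneg_left (reachAux_le_one T k s') (M.nonneg s s')
          _ = 1 := by simp [row_sum M s]

lemma reachAux_of_mem (T : Set S) (k : ℕ) (s : S) (h : s ∈ T) :
    M.reachAux T k s = 1 := by
  cases k with
  | zero => rw [MC.reachAux]; simp [h]
  | succ k => rw [reachAux_succ]; simp [h]

lemma reachAux_mono_step (T : Set S) : ∀ k, ∀ s, M.reachAux T k s ≤ M.reachAux T (k+1) s
  | 0, s => by
      rw [MC.reachAux, reachAux_succ]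
      split
      · exact le_refl 1
      · exact Finset.sum_nonneg fun s' _ =>
          mul_nonneg (M.nonneg s s') (reachAux_nonneg M T 0 s')
  | k+1, s => by
      rw [reachAux_succ, reachAux_succ]
      split
      · exact le_refl 1
      · exact Finset.sum_le_sum fun s' _ =>
          mul_le_mul_of_nonneg_left (reachAux_mono_step T k s') (M.nonneg s s')

lemma reachAux_mono_k (T : Set S) (s : S) : Monotone (fun k => M.reachAux T k s) :=
  monotone_nat_of_le_succ fun k => reachAux_mono_step M T k s

lemma bddAbove_reachAux (T : Set S) (s : S) :
    BddAbove (Set.range fun k => M.reachAux T k s) :=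
  ⟨1, by rintro x ⟨k, rfl⟩; exact reachAux_le_one M T k s⟩

lemma reachAux_le_PReach (T : Set S) (k : ℕ) (s : S) :
    M.reachAux T k s ≤ M.PReach T s :=
  le_ciSup (bddAbove_reachAux M T s) k

lemma PReach_nonneg (T : Set S) (s : S) : 0 ≤ M.PReach T s :=
  (reachAux_nonneg M T 0 s).trans (reachAux_le_PReach M T 0 s)

lemma PReach_le_one (T : Set S) (s : S) : M.PReach T s ≤ 1 :=
  ciSup_le fun k => reachAux_le_one M T k s

lemma PReach_of_mem (T : Set S) (s : S) (h : s ∈ T) : M.PReach T s = 1 :=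
  le_antisymm (PReach_le_one M T s)
    ((reachAux_of_mem M T 0 s h).symm.le.trans (reachAux_le_PReach M T 0 s))

lemma tendsto_reachAux (T : Set S) (s : S) :
    Filter.Tendsto (fun k => M.reachAux T k s) Filter.atTop (nhds (M.PReach T s)) :=
  tendsto_atTop_ciSup (reachAux_mono_k M T s) (bddAbove_reachAux M T s)


/-- superharmonicity of PReach -/
lemma sum_PReach_le (T : Set S) (s : S) :
    ∑ s', M.P s s' * M.PReach T s' ≤ M.PReach T s := by
  have hk : ∀ k, ∑ s', M.P s s' * M.reachAux T k s' ≤ M.PReach T s := by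
    intro k
    by_cases h : s ∈ T
    · calc ∑ s', M.P s s' * M.reachAux T k s'
          ≤ ∑ s', M.P s s' * 1 := Finset.sum_le_sum fun s' _ =>
            mul_le_mul_of_nonneg_left (reachAux_le_one M T k s') (M.nonneg s s')
        _ = 1 := by simp [row_sum M s]
        _ = M.PReach T s := (PReach_of_mem M T s h).symm
    · have : ∑ s', M.P s s' * M.reachAux T k s' = M.reachAux T (k+1) s := by
        rw [reachAux_succ]; simp [h]
      rw [this]; exact reachAux_le_PReach M T (k+1) s
  have htend : Filter.Tendsto (fun k => ∑ s', M.P s s' * M.reachAux T k s')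
      Filter.atTop (nhds (∑ s', M.P s s' * M.PReach T s')) := by
    apply tendsto_finset_sum
    intro s' _
    exact (tendsto_reachAux M T s').const_mul _
  exact le_of_tendsto htend (Filter.Eventually.of_forall hk)

/-- if every state of W reaches T almost surely, then PReach W ≤ PReach T -/
lemma PReach_le_of_as (T W : Set S) (hW : ∀ u ∈ W, M.PReach T u = 1) :
    ∀ s, M.PReach W s ≤ M.PReach T s := by
  have hk : ∀ k s, M.reachAux W k s ≤ M.PReach T s := by
    intro k
    induction k with
    | zero =>
      intro s
      rw [MC.reachAux]
      split
      · exact (hW s ‹_›).symm.le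
      · exact PReach_nonneg M T s
    | succ k ih =>
      intro s
      rw [reachAux_succ]
      split
      · exact (hW s ‹_›).symm.le
      · calc ∑ s', M.P s s' * M.reachAux W k s'
            ≤ ∑ s', M.P s s' * M.PReach T s' := Finset.sum_le_sum fun s' _ =>
              mul_le_mul_of_nonneg_left (ih s') (M.nonneg s s')
          _ ≤ M.PReach T s := sum_PReach_le M T s
  exact fun s => ciSup_le fun k => hk k s

/-- positivity along a positive-probability path -/
lemma exists_reachAux_pos (T : Set S) (s t : S)
    (h : Relation.ReflTransGen (fun u u' => 0 < M.P u u') s t) (ht : t ∈ T) :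
    ∃ k, 0 < M.reachAux T k s := by
  induction h using Relation.ReflTransGen.head_induction_on with
  | refl => exact ⟨0, by rw [MC.reachAux]; simp [ht]⟩
  | head hstep _ ih =>
    rename_i a c _
    obtain ⟨k, hk⟩ := ih
    refine ⟨k + 1, ?_⟩
    rw [reachAux_succ]
    split
    · norm_num
    · have h1 : 0 < M.P a c * M.reachAux T k c := mul_pos hstep hk
      have h2 : ∀ s' ∈ Finset.univ, (0:ℝ) ≤ M.P a s' * M.reachAux T k s' :=
        fun s' _ => mul_nonneg (M.nonneg a s') (reachAux_nonneg M T k s')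
      calc (0:ℝ) < M.P a c * M.reachAux T k c := h1
        _ ≤ ∑ s', M.P a s' * M.reachAux T k s' :=
          Finset.single_le_sum h2 (Finset.mem_univ c)

lemma PReach_pos_of_reach (T : Set S) (s t : S)
    (h : Relation.ReflTransGen (fun u u' => 0 < M.P u u') s t) (ht : t ∈ T) :
    0 < M.PReach T s := by
  obtain ⟨k, hk⟩ := exists_reachAux_pos M T s t h ht
  exact hk.trans_le (reachAux_le_PReach M T k s)


/-- Core analytic lemma: on a closed set `C`, if from every state of `C` the set `T`
is reached within `n` steps with probability at least `p > 0`, then from every state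
of `C` the set `T` is reached almost surely. -/
lemma as_of_closed (T C : Set S) (hC : ∀ c ∈ C, ∀ s', 0 < M.P c s' → s' ∈ C)
    (n : ℕ) (p : ℝ) (hp : 0 < p) (hpn : ∀ c ∈ C, p ≤ M.reachAux T n c) :
    ∀ c ∈ C, M.PReach T c = 1 := by
  have claimA : ∀ m k (Mk : ℝ), 0 ≤ Mk → (∀ c ∈ C, 1 - M.reachAux T k c ≤ Mk) →
      ∀ c ∈ C, 1 - M.reachAux T (m + k) c ≤ (1 - M.reachAux T m c) * Mk := by
    intro m
    induction m with
    | zero =>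
      intro k Mk hMk hbd c hc
      by_cases h : c ∈ T
      · simp [reachAux_of_mem M T _ c h]
      · have h0 : M.reachAux T 0 c = 0 := by rw [MC.reachAux]; simp [h]
        simpa [h0] using hbd c hc
    | succ m ih =>
      intro k Mk hMk hbd c hc
      by_cases h : c ∈ T
      · simp [reachAux_of_mem M T _ c h]
      · have e1 : m + 1 + k = (m + k) + 1 := by ring
        rw [e1, reachAux_succ, reachAux_succ]
        simp only [h, if_false]
        have key : ∀ s', M.P c s' * (1 - M.reachAux T (m + k) s')
            ≤ M.P c s' * ((1 - M.reachAux T m s') * Mk) := by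
          intro s'
          rcases lt_or_eq_of_le (M.nonneg c s') with hP | hP
          · exact mul_le_mul_of_nonneg_left (ih k Mk hMk hbd s' (hC c hc s' hP)) hP.le
          · rw [← hP]; simp
        calc 1 - ∑ s', M.P c s' * M.reachAux T (m + k) s'
            = ∑ s', M.P c s' * (1 - M.reachAux T (m + k) s') := by
              simp [mul_sub, Finset.sum_sub_distrib, row_sum M c]
          _ ≤ ∑ s', M.P c s' * ((1 - M.reachAux T m s') * Mk) :=
              Finset.sum_le_sum fun s' _ => key s'
          _ = (∑ s', M.P c s' * (1 - M.reachAux T m s')) * Mk := by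
              rw [Finset.sum_mul]; exact Finset.sum_congr rfl fun s' _ => by ring
          _ = (1 - ∑ s', M.P c s' * M.reachAux T m s') * Mk := by
              simp [mul_sub, Finset.sum_sub_distrib, row_sum M c]
  intro c hc
  have hp1 : p ≤ 1 := (hpn c hc).trans (reachAux_le_one M T n c)
  have h1p : 0 ≤ 1 - p := by linarith
  have claimB : ∀ j, ∀ c ∈ C, 1 - M.reachAux T (j * n) c ≤ (1 - p) ^ j := by
    intro j
    induction j with
    | zero =>
      intro c hc
      simpa using reachAux_nonneg M T 0 c
    | succ j ih =>
      intro c hc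
      have e1 : (j + 1) * n = n + j * n := by ring
      rw [e1]
      calc 1 - M.reachAux T (n + j * n) c
          ≤ (1 - M.reachAux T n c) * (1 - p) ^ j :=
            claimA n (j * n) ((1 - p) ^ j) (pow_nonneg h1p j) ih c hc
        _ ≤ (1 - p) * (1 - p) ^ j := by
            apply mul_le_mul_of_nonneg_right _ (pow_nonneg h1p j)
            linarith [hpn c hc]
        _ = (1 - p) ^ (j + 1) := by ring
  refine le_antisymm (PReach_le_one M T c) ?_
  have htend : Filter.Tendsto (fun j : ℕ => 1 - (1 - p) ^ j) Filter.atTop (nhds 1) := by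
    have : Filter.Tendsto (fun j : ℕ => (1 - p) ^ j) Filter.atTop (nhds 0) := by
      apply tendsto_pow_atTop_nhds_zero_of_abs_lt_one
      rw [abs_of_nonneg h1p]; linarith
    simpa using Filter.Tendsto.const_sub 1 this
  refine le_of_tendsto htend (Filter.Eventually.of_forall fun j => ?_)
  have := claimB j c hc
  have h2 := reachAux_le_PReach M T (j * n) c
  linarith


lemma reachAux_empty : ∀ k s, M.reachAux (∅ : Set S) k s = 0
  | 0, s => by rw [MC.reachAux]; simp
  | k+1, s => by rw [reachAux_succ]; simp [reachAux_empty k]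

lemma reachAux_mono_set {T T' : Set S} (hT : T ⊆ T') : ∀ k s, M.reachAux T k s ≤ M.reachAux T' k s
  | 0, s => by
      rw [MC.reachAux, MC.reachAux]
      split
      · simp [hT ‹_›]
      · split <;> norm_num
  | k+1, s => by
      rw [reachAux_succ, reachAux_succ]
      split
      · simp [hT ‹_›]
      · split
        · calc ∑ s', M.P s s' * M.reachAux T k s'
              ≤ ∑ s', M.P s s' * 1 := Finset.sum_le_sum fun s' _ =>
                mul_le_mul_of_nonneg_left (reachAux_le_one M T k s') (M.nonneg s s')
            _ = 1 := by simp [row_sum M s]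
        · exact Finset.sum_le_sum fun s' _ =>
            mul_le_mul_of_nonneg_left (reachAux_mono_set hT k s') (M.nonneg s s')

lemma PReach_mono_set {T T' : Set S} (hT : T ⊆ T') (s : S) :
    M.PReach T s ≤ M.PReach T' s :=
  ciSup_le fun k => (reachAux_mono_set M hT k s).trans (reachAux_le_PReach M T' k s)

lemma reachAux_union_le (A B : Set S) : ∀ k s,
    M.reachAux (A ∪ B) k s ≤ M.reachAux A k s + M.reachAux B k s
  | 0, s => by
      rw [MC.reachAux, MC.reachAux, MC.reachAux]
      rcases Classical.em (s ∈ A) with hA | hA <;> rcases Classical.em (s ∈ B) with hB | hB <;>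
        simp [hA, hB]
  | k+1, s => by
      rw [reachAux_succ, reachAux_succ, reachAux_succ]
      rcases Classical.em (s ∈ A) with hA | hA
      · have : s ∈ A ∪ B := Or.inl hA
        simp only [this, hA, if_true]
        split
        · norm_num
        · have := Finset.sum_nonneg (fun s' (_ : s' ∈ Finset.univ) =>
            mul_nonneg (M.nonneg s s') (reachAux_nonneg M B k s'))
          linarith
      · rcases Classical.em (s ∈ B) with hB | hB
        · have : s ∈ A ∪ B := Or.inr hB
          simp only [this, hA, hB, if_true, if_false]
          have := Finset.sum_nonneg (fun s' (_ : s' ∈ Finset.univ) =>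
            mul_nonneg (M.nonneg s s') (reachAux_nonneg M A k s'))
          linarith
        · have : s ∉ A ∪ B := by simp [hA, hB]
          simp only [this, hA, hB, if_false]
          rw [← Finset.sum_add_distrib]
          refine Finset.sum_le_sum fun s' _ => ?_
          rw [← mul_add]
          exact mul_le_mul_of_nonneg_left (reachAux_union_le A B k s') (M.nonneg s s')

lemma PReach_union_le (A B : Set S) (s : S) :
    M.PReach (A ∪ B) s ≤ M.PReach A s + M.PReach B s :=
  ciSup_le fun k => (reachAux_union_le M A B k s).trans
    (add_le_add (reachAux_le_PReach M A k s) (reachAux_le_PReach M B k s))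

lemma reachAux_biUnion_le (𝓑 : Finset (Set S)) : ∀ k s,
    M.reachAux (⋃ B ∈ 𝓑, B) k s ≤ ∑ B ∈ 𝓑, M.reachAux B k s := by
  intro k
  induction 𝓑 using Finset.induction_on with
  | empty => intro s; simp [reachAux_empty]
  | insert _ _ hnotmem _ =>
    rename_i A F ih
    intro s
    have e : (⋃ B ∈ insert A F, B) = A ∪ ⋃ B ∈ F, B := by
      simp [Set.biUnion_insert]
    rw [e, Finset.sum_insert hnotmem]
    calc M.reachAux (A ∪ ⋃ B ∈ F, B) k s
        ≤ M.reachAux A k s + M.reachAux (⋃ B ∈ F, B) k s := reachAux_union_le M _ _ k s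
      _ ≤ M.reachAux A k s + ∑ B ∈ F, M.reachAux B k s := by linarith [ih s]

lemma PReach_biUnion_le (𝓑 : Finset (Set S)) (s : S) :
    M.PReach (⋃ B ∈ 𝓑, B) s ≤ ∑ B ∈ 𝓑, M.PReach B s :=
  ciSup_le fun k => (reachAux_biUnion_le M 𝓑 k s).trans
    (Finset.sum_le_sum fun B _ => reachAux_le_PReach M B k s)

/-- From every state, some BSCC is reachable. -/
lemma exists_bscc_reachable (s : S) :
    ∃ B, M.IsBSCC B ∧ ∃ t ∈ B, Relation.ReflTransGen (fun u u' => 0 < M.P u u') s t := by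
  set step := fun u u' => 0 < M.P u u' with hstep
  set RS := fun t : S => Finset.univ.filter (fun v => Relation.ReflTransGen step t v) with hRS
  set F := Finset.univ.filter (fun t => Relation.ReflTransGen step s t) with hF
  have hsF : s ∈ F := Finset.mem_filter.2 ⟨Finset.mem_univ s, Relation.ReflTransGen.refl⟩
  obtain ⟨t, htF, hmin⟩ := Finset.exists_min_image F (fun t => (RS t).card) ⟨s, hsF⟩
  have hst : Relation.ReflTransGen step s t := by simpa [hF] using htF
  refine ⟨{v | Relation.ReflTransGen step t v}, ⟨⟨t, Relation.ReflTransGen.refl⟩, ?_, ?_⟩,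
    t, Relation.ReflTransGen.refl, hst⟩
  · intro b hb s' hP
    exact Relation.ReflTransGen.tail hb hP
  · intro b hb b' hb'
    have hbF : b ∈ F := by
      simp only [hF, Finset.mem_filter, Finset.mem_univ, true_and]
      exact hst.trans hb
    have hsub : RS b ⊆ RS t := by
      intro v hv
      simp only [hRS, Finset.mem_filter, Finset.mem_univ, true_and] at hv ⊢
      exact hb.trans hv
    have heq : RS b = RS t := Finset.eq_of_subset_of_card_le hsub (hmin b hbF)
    have : b' ∈ RS t := by
      simp only [hRS, Finset.mem_filter, Finset.mem_univ, true_and]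
      exact hb'
    rw [← heq] at this
    simpa [hRS] using this


end MCproof

open MCproof in
/-- **Finite Markov chains almost surely enter a bottom strongly connected component.**
For every state `s` of a finite Markov chain, the union of all BSCCs is reached almost
surely; consequently, if `P_s(Reach T) < 1` for some `T ⊆ S`, then some BSCC `B`
disjoint from `T` is reached with positive probability. -/
theorem bscc_reached_almost_surely {S : Type} [Fintype S] (M : MC S) (s : S) :
    M.PReach {t | ∃ B, M.IsBSCC B ∧ t ∈ B} s = 1 ∧
    ∀ T : Set S, M.PReach T s < 1 →
      ∃ B, M.IsBSCC B ∧ B ∩ T = ∅ ∧ 0 < M.PReach B s := by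
  classical
  set U : Set S := {t | ∃ B, M.IsBSCC B ∧ t ∈ B} with hU
  have hUpos : ∀ u : S, ∃ k, 0 < M.reachAux U k u := by
    intro u
    obtain ⟨B, hB, t, htB, hreach⟩ := exists_bscc_reachable M u
    exact exists_reachAux_pos M U u t hreach ⟨B, hB, htB⟩
  choose kf hkf using hUpos
  set n := Finset.univ.sup kf with hn'
  have hn : ∀ u, 0 < M.reachAux U n u := fun u =>
    (hkf u).trans_le (reachAux_mono_k M U u (Finset.le_sup (Finset.mem_univ u)))
  have hne : (Finset.univ : Finset S).Nonempty := ⟨s, Finset.mem_univ s⟩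
  set p := Finset.univ.inf' hne (fun u => M.reachAux U n u) with hp'
  have hp : 0 < p := (Finset.lt_inf'_iff hne).2 fun u _ => hn u
  have hpn : ∀ c ∈ (Set.univ : Set S), p ≤ M.reachAux U n c :=
    fun c _ => Finset.inf'_le _ (Finset.mem_univ c)
  have part1 : M.PReach U s = 1 :=
    as_of_closed M U Set.univ (fun _ _ _ _ => trivial) n p hp hpn s trivial
  refine ⟨part1, ?_⟩
  intro T hT
  set 𝓑 : Finset (Set S) := Finset.univ.filter (fun B => M.IsBSCC B ∧ B ∩ T = ∅) with h𝓑
  set V : Set S := ⋃ B ∈ 𝓑, B with hV'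
  set U₁ : Set S := {t | ∃ B, M.IsBSCC B ∧ t ∈ B ∧ (B ∩ T).Nonempty} with hU₁'
  have hsub : U ⊆ U₁ ∪ V := by
    rintro t ⟨B, hB, htB⟩
    by_cases hd : B ∩ T = ∅
    · right
      exact Set.mem_biUnion (Finset.mem_filter.2 ⟨Finset.mem_univ B, hB, hd⟩) htB
    · left
      exact ⟨B, hB, htB, Set.nonempty_iff_ne_empty.2 hd⟩
  have hU₁ : ∀ u ∈ U₁, M.PReach T u = 1 := by
    rintro u ⟨B, hB, huB, x, hxB, hxT⟩
    obtain ⟨hBne, hBclosed, hBconn⟩ := hB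
    have hpos : ∀ c : S, ∃ k, (c ∈ B → 0 < M.reachAux T k c) := by
      intro c
      by_cases hc : c ∈ B
      · obtain ⟨k, hk⟩ := exists_reachAux_pos M T c x (hBconn c hc x hxB) hxT
        exact ⟨k, fun _ => hk⟩
      · exact ⟨0, fun h => absurd h hc⟩
    choose kf2 hkf2 using hpos
    set n2 := Finset.univ.sup kf2 with hn2'
    have hn2 : ∀ c ∈ B, 0 < M.reachAux T n2 c := fun c hc =>
      (hkf2 c hc).trans_le (reachAux_mono_k M T c (Finset.le_sup (Finset.mem_univ c)))
    have hBFne : (Finset.univ.filter (· ∈ B)).Nonempty := by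
      obtain ⟨b, hb⟩ := hBne
      exact ⟨b, Finset.mem_filter.2 ⟨Finset.mem_univ b, hb⟩⟩
    set p2 := (Finset.univ.filter (· ∈ B)).inf' hBFne (fun c => M.reachAux T n2 c) with hp2'
    have hp2 : 0 < p2 := (Finset.lt_inf'_iff hBFne).2 fun c hc =>
      hn2 c (Finset.mem_filter.1 hc).2
    have hpn2 : ∀ c ∈ B, p2 ≤ M.reachAux T n2 c := fun c hc =>
      Finset.inf'_le _ (Finset.mem_filter.2 ⟨Finset.mem_univ c, hc⟩)
    exact as_of_closed M T B hBclosed n2 p2 hp2 hpn2 u huB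
  have h1 : (1:ℝ) ≤ M.PReach U₁ s + M.PReach V s := by
    calc (1:ℝ) = M.PReach U s := part1.symm
      _ ≤ M.PReach (U₁ ∪ V) s := PReach_mono_set M hsub s
      _ ≤ M.PReach U₁ s + M.PReach V s := PReach_union_le M U₁ V s
  have h2 : M.PReach U₁ s ≤ M.PReach T s := PReach_le_of_as M T U₁ hU₁ s
  have hVpos : 0 < M.PReach V s := by linarith
  have hVsum : M.PReach V s ≤ ∑ B ∈ 𝓑, M.PReach B s := PReach_biUnion_le M 𝓑 s
  obtain ⟨B, hB𝓑, hBpos⟩ : ∃ B ∈ 𝓑, 0 < M.PReach B s := by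
    by_contra h
    push_neg at h
    have : ∑ B ∈ 𝓑, M.PReach B s ≤ 0 := Finset.sum_nonpos h
    linarith
  obtain ⟨-, hBSCC, hBd⟩ := Finset.mem_filter.1 hB𝓑
  exact ⟨B, hBSCC, hBd, hBpos⟩
end
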